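/- arXiv:2202.10394 — 7 statements merged into one kernel-verified Lean document; each statement's English description precedes it below -/
import Mathlib

section
/- Let a ∈ ℝ and let f : ℝ → ℝ be Lebesgue integrable on every compact subinterval of [a,∞). Define F(x) := ∫_a^x f for x ≥ a. Then for almost every x ∈ (a,∞) the following holds: for every δ ∈ (0, x−a), lim_{s→∞} s² ∫_0^δ e^{−st}(F(x+t) − F(x)) dt = f(x) and lim_{s→∞} (−s²) ∫_0^δ e^{−st}(F(x−t) − F(x)) dt = f(x); in particular, the Laplace derivative LD₁F(x) exists and equals f(x) for almost every x ∈ (a,∞). -/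
open MeasureTheory Filter Topology intervalIntegral


lemma lap_exp_mul_integral {s : ℝ} (hs : 0 < s) (c : ℝ) :
    ∫ t in (0:ℝ)..c, Real.exp (-s * t) * t
      = 1 / s ^ 2 - Real.exp (-s * c) * (c / s + 1 / s ^ 2) := by
  have hderiv : ∀ t ∈ Set.uIcc (0:ℝ) c,
      HasDerivAt (fun u : ℝ => -(Real.exp (-s * u) * (u / s + 1 / s ^ 2)))
        (Real.exp (-s * t) * t) t := by
    intro t _
    have h1 : HasDerivAt (fun u : ℝ => Real.exp (-s * u)) (Real.exp (-s * t) * (-s)) t := by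
      have hlin : HasDerivAt (fun u : ℝ => -s * u) (-s) t := by
        simpa using (hasDerivAt_id t).const_mul (-s)
      simpa using hlin.exp
    have h2 : HasDerivAt (fun u : ℝ => u / s + 1 / s ^ 2) (1 / s) t := by
      exact ((hasDerivAt_id t).div_const s).add_const (1 / s ^ 2)
    have := ((h1.mul h2).neg)
    refine this.congr_deriv ?_
    field_simp
    ring
  have hint : IntervalIntegrable (fun t : ℝ => Real.exp (-s * t) * t) volume 0 c :=
    (Continuous.mul (by fun_prop) continuous_id).intervalIntegrable 0 c
  rw [intervalIntegral.integral_eq_sub_of_hasDerivAt hderiv hint]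
  simp [Real.exp_zero]
  ring

lemma lap_sq_int_le {s : ℝ} (hs : 0 < s) {c : ℝ} (hc : 0 ≤ c) :
    s ^ 2 * ∫ t in (0:ℝ)..c, Real.exp (-s * t) * t ≤ 1 := by
  rw [lap_exp_mul_integral hs c]
  have hE : 0 ≤ Real.exp (-s * c) * (c / s + 1 / s ^ 2) := by positivity
  have hs2 : (s:ℝ) ^ 2 ≠ 0 := by positivity
  have e : s ^ 2 * (1 / s ^ 2 - Real.exp (-s * c) * (c / s + 1 / s ^ 2))
      = 1 - s ^ 2 * (Real.exp (-s * c) * (c / s + 1 / s ^ 2)) := by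
    field_simp
  rw [e]
  nlinarith [mul_nonneg (sq_nonneg s) hE]

lemma lap_sq_int_tendsto {δ : ℝ} (hδ : 0 < δ) :
    Tendsto (fun s : ℝ => s ^ 2 * ∫ t in (0:ℝ)..δ, Real.exp (-s * t) * t) atTop (𝓝 1) := by
  have hmul : Tendsto (fun s : ℝ => s * δ) atTop atTop :=
    Tendsto.atTop_mul_const hδ tendsto_id
  have h1 : Tendsto (fun s : ℝ => (s * δ) * Real.exp (-(s * δ))) atTop (𝓝 0) := by
    have := (Real.tendsto_pow_mul_exp_neg_atTop_nhds_zero 1).comp hmul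
    simpa [Function.comp_def] using this
  have h2 : Tendsto (fun s : ℝ => Real.exp (-(s * δ))) atTop (𝓝 0) :=
    Real.tendsto_exp_neg_atTop_nhds_zero.comp hmul
  have h3 : Tendsto (fun s : ℝ => 1 - ((s * δ) * Real.exp (-(s * δ)) + Real.exp (-(s * δ))))
      atTop (𝓝 1) := by
    simpa using (tendsto_const_nhds (x := (1:ℝ)) (f := atTop)).sub (h1.add h2)
  apply h3.congr'
  filter_upwards [eventually_gt_atTop (0:ℝ)] with s hs
  rw [lap_exp_mul_integral hs δ]
  have hs2 : (s:ℝ) ^ 2 ≠ 0 := by positivity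
  have : Real.exp (-(s * δ)) = Real.exp (-s * δ) := by ring_nf
  rw [this]
  field_simp

lemma lap_kernel {δ L : ℝ} (hδ : 0 < δ) {g : ℝ → ℝ}
    (hg : ContinuousOn g (Set.Icc 0 δ)) (hg0 : g 0 = 0)
    (hlim : Tendsto (fun t => g t / t) (𝓝[>] (0:ℝ)) (𝓝 L)) :
    Tendsto (fun s : ℝ => s ^ 2 * ∫ t in (0:ℝ)..δ, Real.exp (-s * t) * g t) atTop (𝓝 L) := by
  set r : ℝ → ℝ := fun t => g t - L * t with hr_def
  have hr_cont : ContinuousOn r (Set.Icc 0 δ) := hg.sub (by fun_prop)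
  have hr0 : r 0 = 0 := by simp [hr_def, hg0]
  -- bound on r
  obtain ⟨C, hC⟩ := (isCompact_Icc (a := (0:ℝ)) (b := δ)).exists_bound_of_continuousOn hr_cont
  set M : ℝ := max C 0 with hM_def
  have hM0 : 0 ≤ M := le_max_right _ _
  have hM : ∀ t ∈ Set.Icc (0:ℝ) δ, |r t| ≤ M := fun t ht =>
    (hC t ht).trans (le_max_left _ _)
  -- continuity facts
  have hexp_cont : ∀ s : ℝ, Continuous fun t : ℝ => Real.exp (-s * t) := by fun_prop
  have hint_r : ∀ s : ℝ, ∀ c d : ℝ, Set.uIcc c d ⊆ Set.Icc 0 δ →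
      IntervalIntegrable (fun t => Real.exp (-s * t) * r t) volume c d := by
    intro s c d hsub
    exact (((hexp_cont s).continuousOn).mul (hr_cont.mono hsub)).intervalIntegrable
  have hint_t : ∀ s : ℝ, ∀ c d : ℝ,
      IntervalIntegrable (fun t => Real.exp (-s * t) * t) volume c d := by
    intro s c d
    exact (Continuous.mul (hexp_cont s) continuous_id).intervalIntegrable c d
  -- the remainder part tends to 0
  have hP : Tendsto (fun s : ℝ => s ^ 2 * ∫ t in (0:ℝ)..δ, Real.exp (-s * t) * r t)
      atTop (𝓝 0) := by
    rw [NormedAddCommGroup.tendsto_nhds_zero]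
    intro ε hε
    obtain ⟨d, hd0, hd⟩ := Metric.tendsto_nhdsWithin_nhds.mp hlim (ε / 2) (by linarith)
    set δ' : ℝ := min (d / 2) δ with hδ'_def
    have hδ'0 : 0 < δ' := lt_min (by linarith) hδ
    have hδ'le : δ' ≤ δ := min_le_right _ _
    have hrle : ∀ t ∈ Set.Icc (0:ℝ) δ', |r t| ≤ ε / 2 * t := by
      intro t ht
      rcases eq_or_lt_of_le ht.1 with h | h
      · simp [← h, hr0]
      · have htd : dist t 0 < d := by
          rw [Real.dist_eq, sub_zero, abs_of_pos h]
          have : t ≤ d / 2 := ht.2.trans (min_le_left _ _)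
          linarith
        have := hd (Set.mem_Ioi.mpr h) htd
        rw [Real.dist_eq] at this
        have ht' : t ≠ 0 := ne_of_gt h
        have heq : r t = (g t / t - L) * t := by
          field_simp [hr_def]
          ring
        rw [heq, abs_mul, abs_of_pos h]
        exact mul_le_mul_of_nonneg_right this.le h.le
    -- tail bound tends to 0
    have hT : Tendsto (fun s : ℝ => s ^ 2 * Real.exp (-(s * δ')) * (M * δ)) atTop (𝓝 0) := by
      have hmul : Tendsto (fun s : ℝ => s * δ') atTop atTop :=
        Tendsto.atTop_mul_const hδ'0 tendsto_id
      have h := (Real.tendsto_pow_mul_exp_neg_atTop_nhds_zero 2).comp hmul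
      have h2 := h.mul_const (M * δ / δ' ^ 2)
      rw [zero_mul] at h2
      apply h2.congr
      intro s
      have : δ' ^ 2 ≠ 0 := by positivity
      simp only [Function.comp_apply]
      field_simp
    have hTev : ∀ᶠ s in atTop, s ^ 2 * Real.exp (-(s * δ')) * (M * δ) < ε / 2 := by
      have := hT.eventually (eventually_lt_nhds (by linarith : (0:ℝ) < ε / 2))
      simpa using this
    filter_upwards [hTev, eventually_gt_atTop (0:ℝ)] with s hTs hs0
    -- split the integral
    have hsub1 : Set.uIcc (0:ℝ) δ' ⊆ Set.Icc 0 δ := by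
      rw [Set.uIcc_of_le hδ'0.le]; exact Set.Icc_subset_Icc le_rfl hδ'le
    have hsub2 : Set.uIcc δ' δ ⊆ Set.Icc 0 δ := by
      rw [Set.uIcc_of_le hδ'le]; exact Set.Icc_subset_Icc hδ'0.le le_rfl
    have hsplit : (∫ t in (0:ℝ)..δ, Real.exp (-s * t) * r t)
        = (∫ t in (0:ℝ)..δ', Real.exp (-s * t) * r t)
          + ∫ t in δ'..δ, Real.exp (-s * t) * r t := by
      rw [intervalIntegral.integral_add_adjacent_intervals (hint_r s 0 δ' hsub1)
        (hint_r s δ' δ hsub2)]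
    -- bound the first piece
    have hA : |∫ t in (0:ℝ)..δ', Real.exp (-s * t) * r t|
        ≤ ε / 2 * ∫ t in (0:ℝ)..δ', Real.exp (-s * t) * t := by
      have h1 : |∫ t in (0:ℝ)..δ', Real.exp (-s * t) * r t|
          ≤ ∫ t in (0:ℝ)..δ', |Real.exp (-s * t) * r t| :=
        intervalIntegral.abs_integral_le_integral_abs hδ'0.le
      have h2 : (∫ t in (0:ℝ)..δ', |Real.exp (-s * t) * r t|)
          ≤ ∫ t in (0:ℝ)..δ', ε / 2 * (Real.exp (-s * t) * t) := by
        apply intervalIntegral.integral_mono_on hδ'0.le ((hint_r s 0 δ' hsub1).abs)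
          ((hint_t s 0 δ').const_mul _)
        intro t ht
        rw [abs_mul, abs_of_pos (Real.exp_pos _)]
        calc Real.exp (-s * t) * |r t| ≤ Real.exp (-s * t) * (ε / 2 * t) :=
              mul_le_mul_of_nonneg_left (hrle t ht) (Real.exp_pos _).le
          _ = ε / 2 * (Real.exp (-s * t) * t) := by ring
      calc |∫ t in (0:ℝ)..δ', Real.exp (-s * t) * r t|
          ≤ ∫ t in (0:ℝ)..δ', |Real.exp (-s * t) * r t| := h1
        _ ≤ ∫ t in (0:ℝ)..δ', ε / 2 * (Real.exp (-s * t) * t) := h2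
        _ = ε / 2 * ∫ t in (0:ℝ)..δ', Real.exp (-s * t) * t := by
            rw [intervalIntegral.integral_const_mul]
    -- bound the second piece
    have hB : |∫ t in δ'..δ, Real.exp (-s * t) * r t| ≤ Real.exp (-(s * δ')) * M * (δ - δ') := by
      have h := intervalIntegral.norm_integral_le_of_norm_le_const
        (C := Real.exp (-(s * δ')) * M) (f := fun t => Real.exp (-s * t) * r t)
        (a := δ') (b := δ) ?_
      · rw [abs_of_nonneg (by linarith : (0:ℝ) ≤ δ - δ')] at h
        simpa using h
      · intro t ht
        rw [Set.uIoc_of_le hδ'le] at ht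
        have ht1 : δ' ≤ t := ht.1.le
        have ht2 : t ≤ δ := ht.2
        rw [Real.norm_eq_abs, abs_mul, abs_of_pos (Real.exp_pos _)]
        have he : Real.exp (-s * t) ≤ Real.exp (-(s * δ')) := by
          apply Real.exp_le_exp.mpr
          nlinarith
        exact mul_le_mul he (hM t ⟨hδ'0.le.trans ht1, ht2⟩) (abs_nonneg _) (Real.exp_pos _).le
    -- combine
    rw [Real.norm_eq_abs, hsplit, mul_add]
    have hs2 : (0:ℝ) ≤ s ^ 2 := sq_nonneg s
    calc |(s ^ 2 * ∫ t in (0:ℝ)..δ', Real.exp (-s * t) * r t)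
          + s ^ 2 * ∫ t in δ'..δ, Real.exp (-s * t) * r t|
        ≤ s ^ 2 * |∫ t in (0:ℝ)..δ', Real.exp (-s * t) * r t|
          + s ^ 2 * |∫ t in δ'..δ, Real.exp (-s * t) * r t| := by
          refine (abs_add_le _ _).trans ?_
          rw [abs_mul, abs_mul, abs_of_nonneg hs2]
      _ ≤ s ^ 2 * (ε / 2 * ∫ t in (0:ℝ)..δ', Real.exp (-s * t) * t)
          + s ^ 2 * (Real.exp (-(s * δ')) * M * (δ - δ')) := by
          gcongr
      _ ≤ ε / 2 * 1 + s ^ 2 * Real.exp (-(s * δ')) * (M * δ) := by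
          gcongr ?_ + ?_
          · have := lap_sq_int_le hs0 hδ'0.le
            calc s ^ 2 * (ε / 2 * ∫ t in (0:ℝ)..δ', Real.exp (-s * t) * t)
                = ε / 2 * (s ^ 2 * ∫ t in (0:ℝ)..δ', Real.exp (-s * t) * t) := by ring
              _ ≤ ε / 2 * 1 := by
                  apply mul_le_mul_of_nonneg_left this (by linarith)
          · nlinarith [mul_nonneg (mul_nonneg hs2 (Real.exp_pos (-(s * δ'))).le) (mul_nonneg hM0 hδ'0.le)]
      _ < ε / 2 + ε / 2 := by rw [mul_one]; exact add_lt_add_right hTs _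
      _ = ε := by ring
  -- assemble
  have heq : ∀ s : ℝ, s ^ 2 * ∫ t in (0:ℝ)..δ, Real.exp (-s * t) * g t
      = L * (s ^ 2 * ∫ t in (0:ℝ)..δ, Real.exp (-s * t) * t)
        + s ^ 2 * ∫ t in (0:ℝ)..δ, Real.exp (-s * t) * r t := by
    intro s
    have hfe : (fun t => Real.exp (-s * t) * g t)
        = fun t => L * (Real.exp (-s * t) * t) + Real.exp (-s * t) * r t := by
      funext t; simp only [hr_def]; ring
    have hsub : Set.uIcc (0:ℝ) δ ⊆ Set.Icc 0 δ := by rw [Set.uIcc_of_le hδ.le]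
    rw [hfe, intervalIntegral.integral_add ((hint_t s 0 δ).const_mul L) (hint_r s 0 δ hsub),
      intervalIntegral.integral_const_mul]
    ring
  have := ((lap_sq_int_tendsto hδ).const_mul L).add hP
  rw [mul_one, add_zero] at this
  exact this.congr fun s => (heq s).symm

lemma lap_int_eq_avg {g : ℝ → ℝ} (x t : ℝ) (ht : 0 < t) :
    (∫ y in Metric.closedBall x t, ‖g y - g x‖)
      = 2 * t * ⨍ y in Metric.closedBall x t, ‖g y - g x‖ := by
  have hvol : (volume (Metric.closedBall x t)).toReal = 2 * t := by
    rw [Real.volume_closedBall]; exact ENNReal.toReal_ofReal (by linarith)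
  rw [setAverage_eq, measureReal_def, hvol, smul_eq_mul]
  field_simp

lemma lap_slope_bound {g : ℝ → ℝ} (hg : LocallyIntegrable g volume) (x t c d : ℝ)
    (ht : 0 < t) (hcd : c ≤ d) (hsub : Set.Ioc c d ⊆ Metric.closedBall x t) :
    |(∫ u in c..d, g u) - (d - c) * g x|
      ≤ 2 * t * ⨍ y in Metric.closedBall x t, ‖g y - g x‖ := by
  have hIcb : IntegrableOn (fun u => g u - g x) (Metric.closedBall x t) := by
    exact (hg.integrableOn_isCompact (isCompact_closedBall x t)).sub
      (integrableOn_const measure_closedBall_lt_top.ne)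
  have hIoc : IntegrableOn (fun u => g u - g x) (Set.Ioc c d) := hIcb.mono_set hsub
  have heq : (∫ u in c..d, g u) - (d - c) * g x = ∫ u in Set.Ioc c d, (g u - g x) := by
    rw [intervalIntegral.integral_of_le hcd,
      integral_sub (hg.integrableOn_isCompact isCompact_Icc |>.mono_set Set.Ioc_subset_Icc_self)
        (integrableOn_const (by rw [Real.volume_Ioc]; exact ENNReal.ofReal_ne_top))]
    congr 1
    rw [setIntegral_const, measureReal_def, Real.volume_Ioc, smul_eq_mul,
      ENNReal.toReal_ofReal (by linarith : (0:ℝ) ≤ d - c)]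
  rw [heq, ← lap_int_eq_avg x t ht]
  calc |∫ u in Set.Ioc c d, (g u - g x)| ≤ ∫ u in Set.Ioc c d, ‖g u - g x‖ := by
        simpa [Real.norm_eq_abs] using norm_integral_le_integral_norm
          (μ := volume.restrict (Set.Ioc c d)) (fun u => g u - g x)
    _ ≤ ∫ y in Metric.closedBall x t, ‖g y - g x‖ := by
        apply setIntegral_mono_set hIcb.norm (Filter.Eventually.of_forall fun u => norm_nonneg _)
          (HasSubset.Subset.eventuallyLE hsub)

/-- **Fundamental theorem of calculus for the Laplace derivative.**
If `f` is Lebesgue integrable on every compact subinterval of `[a,∞)` and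
`F x = ∫_a^x f`, then for almost every `x ∈ (a,∞)` and every `δ ∈ (0, x - a)` the two
one-sided Laplace-derivative limits of `F` at `x` exist and equal `f x`; in particular
`LD₁F = f` a.e. on `(a,∞)`. -/
theorem laplaceDeriv_of_primitive (a : ℝ) (f : ℝ → ℝ)
    (hf : ∀ c, a ≤ c → IntegrableOn f (Set.Icc a c)) :
    ∀ᵐ x : ℝ, x ∈ Set.Ioi a → ∀ δ : ℝ, 0 < δ → δ < x - a →
      Tendsto (fun s : ℝ => s ^ 2 *
          ∫ t in (0:ℝ)..δ, Real.exp (-s * t) *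
            ((∫ u in a..(x + t), f u) - ∫ u in a..x, f u))
        atTop (𝓝 (f x)) ∧
      Tendsto (fun s : ℝ => -s ^ 2 *
          ∫ t in (0:ℝ)..δ, Real.exp (-s * t) *
            ((∫ u in a..(x - t), f u) - ∫ u in a..x, f u))
        atTop (𝓝 (f x)) := by
  classical
  set g : ℝ → ℝ := (Set.Ici a).indicator f with hg_def
  have hg_loc : LocallyIntegrable g volume := by
    rw [locallyIntegrable_iff]
    intro k hk
    obtain ⟨r, hr⟩ := hk.isBounded.subset_closedBall 0
    apply IntegrableOn.mono_set ?_ hr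
    rw [Real.closedBall_eq_Icc, zero_sub, zero_add, IntegrableOn, hg_def,
      integrable_indicator_iff measurableSet_Ici, IntegrableOn,
      Measure.restrict_restrict measurableSet_Ici]
    exact (hf (max r a) (le_max_right _ _)).mono_set
      (fun u hu => ⟨hu.1, hu.2.2.trans (le_max_left _ _)⟩)
  have hII : ∀ c d : ℝ, IntervalIntegrable g volume c d := fun c d =>
    (hg_loc.integrableOn_isCompact isCompact_uIcc).intervalIntegrable
  set F : ℝ → ℝ := fun y => ∫ u in a..y, g u with hF_def
  have hFcont : Continuous F := intervalIntegral.continuous_primitive (fun c d => hII c d) a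
  have hFadd : ∀ y z : ℝ, F z - F y = ∫ u in y..z, g u := by
    intro y z
    have := intervalIntegral.integral_add_adjacent_intervals (hII a y) (hII y z)
    simp only [hF_def]
    linarith
  filter_upwards [IsUnifLocDoublingMeasure.ae_tendsto_average_norm_sub volume hg_loc 1]
    with x hx hxa δ hδ hδx
  have hxa' : a < x := hxa
  have hgx : g x = f x := Set.indicator_of_mem (le_of_lt hxa') f
  have havg : Tendsto (fun t : ℝ => ⨍ y in Metric.closedBall x t, ‖g y - g x‖)
      (𝓝[>] (0:ℝ)) (𝓝 0) := by
    apply hx (fun _ => x) (fun t => t) tendsto_id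
    filter_upwards [self_mem_nhdsWithin] with t ht
    exact Metric.mem_closedBall_self (by simpa using (le_of_lt ht))
  have havg2 : Tendsto (fun t : ℝ => 2 * ⨍ y in Metric.closedBall x t, ‖g y - g x‖)
      (𝓝[>] (0:ℝ)) (𝓝 0) := by simpa using havg.const_mul 2
  have hfg : ∀ y : ℝ, a ≤ y → (∫ u in a..y, f u) = F y := by
    intro y hy
    apply intervalIntegral.integral_congr
    intro u hu
    rw [Set.uIcc_of_le hy] at hu
    exact (Set.indicator_of_mem hu.1 f).symm
  -- right slope limit
  have hslopeR : Tendsto (fun t => (F (x + t) - F x) / t) (𝓝[>] (0:ℝ)) (𝓝 (f x)) := by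
    rw [← tendsto_sub_nhds_zero_iff]
    apply squeeze_zero_norm' ?_ havg2
    filter_upwards [self_mem_nhdsWithin] with t ht
    have ht0 : 0 < t := ht
    have hsub : Set.Ioc x (x + t) ⊆ Metric.closedBall x t := by
      rw [Real.closedBall_eq_Icc]
      exact fun u hu => ⟨by linarith [hu.1], hu.2⟩
    have hb := lap_slope_bound hg_loc x t x (x + t) ht0 (by linarith) hsub
    have he : (F (x + t) - F x) / t - f x
        = ((∫ u in x..(x + t), g u) - ((x + t) - x) * g x) / t := by
      rw [← hFadd x (x + t), hgx]
      field_simp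
      ring
    rw [Real.norm_eq_abs, he, abs_div, abs_of_pos ht0, div_le_iff₀ ht0]
    have havgnn : 0 ≤ ⨍ y in Metric.closedBall x t, ‖g y - g x‖ := by
      rw [setAverage_eq]
      exact smul_nonneg (by positivity) (setIntegral_nonneg measurableSet_closedBall
        (fun y _ => norm_nonneg _))
    nlinarith [hb]
  -- left slope limit
  have hslopeL : Tendsto (fun t => (F x - F (x - t)) / t) (𝓝[>] (0:ℝ)) (𝓝 (f x)) := by
    rw [← tendsto_sub_nhds_zero_iff]
    apply squeeze_zero_norm' ?_ havg2
    filter_upwards [self_mem_nhdsWithin] with t ht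
    have ht0 : 0 < t := ht
    have hsub : Set.Ioc (x - t) x ⊆ Metric.closedBall x t := by
      rw [Real.closedBall_eq_Icc]
      exact fun u hu => ⟨hu.1.le, by linarith [hu.2]⟩
    have hb := lap_slope_bound hg_loc x t (x - t) x ht0 (by linarith) hsub
    have he : (F x - F (x - t)) / t - f x
        = ((∫ u in (x - t)..x, g u) - (x - (x - t)) * g x) / t := by
      rw [← hFadd (x - t) x, hgx]
      field_simp
      ring
    rw [Real.norm_eq_abs, he, abs_div, abs_of_pos ht0, div_le_iff₀ ht0]
    have havgnn : 0 ≤ ⨍ y in Metric.closedBall x t, ‖g y - g x‖ := by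
      rw [setAverage_eq]
      exact smul_nonneg (by positivity) (setIntegral_nonneg measurableSet_closedBall
        (fun y _ => norm_nonneg _))
    nlinarith [hb]
  constructor
  · have hc : ContinuousOn (fun t => F (x + t) - F x) (Set.Icc 0 δ) :=
      ((hFcont.comp (continuous_const.add continuous_id)).sub continuous_const).continuousOn
    have hk := lap_kernel hδ hc (by simp) hslopeR
    apply hk.congr
    intro s
    congr 1
    apply intervalIntegral.integral_congr
    intro t htt
    rw [Set.uIcc_of_le hδ.le] at htt
    show Real.exp (-s * t) * (F (x + t) - F x)
      = Real.exp (-s * t) * ((∫ u in a..(x + t), f u) - ∫ u in a..x, f u)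
    rw [hfg (x + t) (by linarith [htt.1]), hfg x hxa'.le]
  · have hc : ContinuousOn (fun t => F x - F (x - t)) (Set.Icc 0 δ) :=
      (continuous_const.sub (hFcont.comp (continuous_const.sub continuous_id))).continuousOn
    have hk := lap_kernel hδ hc (by simp) hslopeL
    apply hk.congr
    intro s
    have h1 : (∫ t in (0:ℝ)..δ, Real.exp (-s * t) *
          ((∫ u in a..(x - t), f u) - ∫ u in a..x, f u))
        = ∫ t in (0:ℝ)..δ, Real.exp (-s * t) * (F (x - t) - F x) := by
      apply intervalIntegral.integral_congr
      intro t htt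
      rw [Set.uIcc_of_le hδ.le] at htt
      show Real.exp (-s * t) * ((∫ u in a..(x - t), f u) - ∫ u in a..x, f u)
        = Real.exp (-s * t) * (F (x - t) - F x)
      rw [hfg (x - t) (by linarith [htt.2]), hfg x hxa'.le]
    rw [h1]
    have h2 : (fun t => Real.exp (-s * t) * (F x - F (x - t)))
        = fun t => -(Real.exp (-s * t) * (F (x - t) - F x)) := by
      funext t; ring
    rw [h2, intervalIntegral.integral_neg]
    ring
end

section
/- Let a ∈ ℝ and let f : [a,∞) → ℝ be Lebesgue integrable on every compact subinterval of [a,∞) such that F(x) := ∫_a^x f is bounded on [a,∞). Let g : [a,∞) → ℝ be Lebesgue integrable on [a,∞) and of bounded variation on [a,∞), and set G(x) := ∫_a^x g. If lim_{x→∞} F(x)G(x) exists, then Fg is Lebesgue integrable on [a,∞), the improper integral ∫_a^∞ fG exists, and ∫_a^∞ fG = lim_{x→∞} F(x)G(x) − ∫_a^∞ Fg. -/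
open MeasureTheory Filter Topology intervalIntegral

private lemma dbr_parts (a c : ℝ) (hac : a ≤ c) (f g : ℝ → ℝ)
    (hf : IntegrableOn f (Set.Icc a c)) (hg : IntegrableOn g (Set.Icc a c)) :
    (∫ x in Set.Ioc a c, f x * ∫ t in a..x, g t) +
      (∫ x in Set.Ioc a c, (∫ t in a..x, f t) * g x)
      = (∫ t in a..c, f t) * (∫ t in a..c, g t) := by
  set μ := volume.restrict (Set.Ioc a c) with hμ
  have hf' : Integrable f μ := hf.mono_set Set.Ioc_subset_Icc_self
  have hg' : Integrable g μ := hg.mono_set Set.Ioc_subset_Icc_self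
  have hfic : IntervalIntegrable f volume a c :=
    IntegrableOn.intervalIntegrable (by rwa [Set.uIcc_of_le hac])
  have hgic : IntervalIntegrable g volume a c :=
    IntegrableOn.intervalIntegrable (by rwa [Set.uIcc_of_le hac])
  have hk : Integrable (fun p : ℝ × ℝ => f p.1 * g p.2) (μ.prod μ) := hf'.mul_prod hg'
  have hsm : MeasurableSet {p : ℝ × ℝ | p.1 < p.2} :=
    measurableSet_lt measurable_fst measurable_snd
  have hk' : Integrable ({p : ℝ × ℝ | p.1 < p.2}.indicator fun p => f p.1 * g p.2)
      (μ.prod μ) := hk.indicator hsm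
  have hswap :
      (∫ x, (∫ y, ({p : ℝ × ℝ | p.1 < p.2}.indicator fun p => f p.1 * g p.2) (x, y) ∂μ) ∂μ)
        = ∫ y, (∫ x,
            ({p : ℝ × ℝ | p.1 < p.2}.indicator fun p => f p.1 * g p.2) (x, y) ∂μ) ∂μ :=
    integral_integral_swap hk'
  -- left side of the swap
  have hL : (∫ x, (∫ y, ({p : ℝ × ℝ | p.1 < p.2}.indicator fun p => f p.1 * g p.2) (x, y) ∂μ) ∂μ)
      = ∫ x in Set.Ioc a c, f x * ((∫ t in a..c, g t) - ∫ t in a..x, g t) := by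
    rw [hμ]
    apply setIntegral_congr_fun measurableSet_Ioc
    intro x hx
    beta_reduce
    have h1 : (fun y => ({p : ℝ × ℝ | p.1 < p.2}.indicator fun p => f p.1 * g p.2) (x, y))
        = (Set.Ioi x).indicator (fun y => f x * g y) := by
      funext y
      by_cases h : x < y <;> simp [Set.indicator_apply, h]
    rw [h1, MeasureTheory.integral_indicator measurableSet_Ioi,
      Measure.restrict_restrict measurableSet_Ioi]
    have hset : Set.Ioi x ∩ Set.Ioc a c = Set.Ioc x c := by
      ext y
      simp only [Set.mem_inter_iff, Set.mem_Ioi, Set.mem_Ioc]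
      exact ⟨fun h => ⟨h.1, h.2.2⟩, fun h => ⟨h.1, lt_trans hx.1 h.1, h.2⟩⟩
    rw [hset, MeasureTheory.integral_const_mul]
    congr 1
    rw [← intervalIntegral.integral_of_le hx.2,
      ← intervalIntegral.integral_interval_sub_left hgic
        (hgic.mono_set (by
          rw [Set.uIcc_of_le hx.1.le, Set.uIcc_of_le hac]
          exact Set.Icc_subset_Icc le_rfl hx.2))]
  -- right side of the swap
  have hR : (∫ y, (∫ x, ({p : ℝ × ℝ | p.1 < p.2}.indicator fun p => f p.1 * g p.2) (x, y) ∂μ) ∂μ)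
      = ∫ y in Set.Ioc a c, (∫ t in a..y, f t) * g y := by
    rw [hμ]
    apply setIntegral_congr_fun measurableSet_Ioc
    intro y hy
    beta_reduce
    have h1 : (fun x => ({p : ℝ × ℝ | p.1 < p.2}.indicator fun p => f p.1 * g p.2) (x, y))
        = (Set.Iio y).indicator (fun x => f x * g y) := by
      funext x
      by_cases h : x < y <;> simp [Set.indicator_apply, h]
    rw [h1, MeasureTheory.integral_indicator measurableSet_Iio,
      Measure.restrict_restrict measurableSet_Iio]
    have hset : Set.Iio y ∩ Set.Ioc a c = Set.Ioo a y := by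
      ext x
      simp only [Set.mem_inter_iff, Set.mem_Iio, Set.mem_Ioc, Set.mem_Ioo]
      exact ⟨fun h => ⟨h.2.1, h.1⟩, fun h => ⟨h.2, h.1, le_trans h.2.le hy.2⟩⟩
    rw [hset, ← MeasureTheory.integral_Ioc_eq_integral_Ioo,
      MeasureTheory.integral_mul_const, ← intervalIntegral.integral_of_le hy.1.le]
  -- integrability of x ↦ f x * (∫ t in a..x, g t) on Ioc a c
  have hI1 : Integrable (fun x => f x * ∫ t in a..x, g t) μ := by
    have h := hfic.mul_continuousOn
      (intervalIntegral.continuousOn_primitive_interval' hgic Set.left_mem_uIcc)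
    rwa [intervalIntegrable_iff_integrableOn_Ioc_of_le hac] at h
  have hsplit : (∫ x in Set.Ioc a c, f x * ((∫ t in a..c, g t) - ∫ t in a..x, g t))
      = (∫ t in a..c, f t) * (∫ t in a..c, g t)
        - ∫ x in Set.Ioc a c, f x * ∫ t in a..x, g t := by
    have heq : (fun x => f x * ((∫ t in a..c, g t) - ∫ t in a..x, g t))
        = fun x => f x * (∫ t in a..c, g t) - f x * ∫ t in a..x, g t :=
      funext fun x => by ring
    rw [heq, integral_sub (hf'.mul_const _) hI1, MeasureTheory.integral_mul_const]
    simp only [hμ, intervalIntegral.integral_of_le hac]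
  have h2 : (∫ x in Set.Ioc a c, (∫ t in a..x, f t) * g x)
      = (∫ t in a..c, f t) * (∫ t in a..c, g t)
        - ∫ x in Set.Ioc a c, f x * ∫ t in a..x, g t := by
    rw [← hR, ← hswap, hL, hsplit]
  rw [h2]; ring

/-- **Du Bois-Reymond's theorem.**
Suppose `f` is Lebesgue integrable on every compact subinterval of `[a,∞)` with bounded
primitive `F x = ∫_a^x f`, and `g` is Lebesgue integrable and of bounded variation on
`[a,∞)` with `G x = ∫_a^x g`. If `lim_{x→∞} F x * G x` exists, then `F·g` is Lebesgue
integrable on `[a,∞)`, the improper integral `∫_a^∞ f·G` exists, and it equals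
`lim_{x→∞} F x * G x − ∫_a^∞ F·g`. -/
theorem du_bois_reymond (a : ℝ) (f g : ℝ → ℝ) (L : ℝ)
    (hf : ∀ c, a ≤ c → IntegrableOn f (Set.Icc a c))
    (F : ℝ → ℝ) (hF : ∀ x, F x = ∫ t in a..x, f t)
    (hFbd : ∃ M : ℝ, ∀ x, a ≤ x → |F x| ≤ M)
    (hg : IntegrableOn g (Set.Ici a))
    (hgBV : BoundedVariationOn g (Set.Ici a))
    (G : ℝ → ℝ) (hG : ∀ x, G x = ∫ t in a..x, g t)
    (hlim : Tendsto (fun x => F x * G x) atTop (𝓝 L)) :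
    IntegrableOn (fun x => F x * g x) (Set.Ici a) ∧
    Tendsto (fun c => ∫ x in a..c, f x * G x) atTop
      (𝓝 (L - ∫ x in Set.Ici a, F x * g x)) := by
  obtain ⟨M, hM⟩ := hFbd
  have hFfun : F = fun b => ∫ t in a..b, f t := funext hF
  -- F is continuous on [a, ∞)
  have hFcont : ContinuousOn F (Set.Ici a) := by
    intro x hx
    have hax : a ≤ x := hx
    have hfic : IntervalIntegrable f volume a (x + 1) :=
      IntegrableOn.intervalIntegrable
        (by rw [Set.uIcc_of_le (by linarith)]; exact hf (x + 1) (by linarith))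
    have h2 : ContinuousOn F (Set.uIcc a (x + 1)) := by
      rw [hFfun]
      exact intervalIntegral.continuousOn_primitive_interval' hfic Set.left_mem_uIcc
    have hmem : Set.uIcc a (x + 1) ∈ 𝓝[Set.Ici a] x := by
      rw [mem_nhdsWithin]
      refine ⟨Set.Iio (x + 1), isOpen_Iio, lt_add_one x, fun y hy => ?_⟩
      rw [Set.uIcc_of_le (by linarith)]
      exact ⟨hy.2, le_of_lt hy.1⟩
    exact ContinuousWithinAt.mono_of_mem_nhdsWithin
      (h2 x (by rw [Set.uIcc_of_le (by linarith)]; exact ⟨hax, by linarith⟩)) hmem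
  have hFg : IntegrableOn (fun x => F x * g x) (Set.Ici a) := by
    have hmeas : AEStronglyMeasurable (fun x => F x * g x) (volume.restrict (Set.Ici a)) :=
      (hFcont.aestronglyMeasurable measurableSet_Ici).mul hg.1
    refine Integrable.mono' (hg.norm.const_mul M) hmeas ?_
    rw [ae_restrict_iff' measurableSet_Ici]
    filter_upwards with x hx
    have : ‖F x * g x‖ = |F x| * ‖g x‖ := by
      rw [norm_mul]; rfl
    rw [this]
    exact mul_le_mul_of_nonneg_right (hM x hx) (norm_nonneg _)
  refine ⟨hFg, ?_⟩
  have key : ∀ c, a ≤ c →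
      (∫ x in a..c, f x * G x) + (∫ x in a..c, F x * g x) = F c * G c := by
    intro c hc
    have h := dbr_parts a c hc f g (hf c hc) (hg.mono_set Set.Icc_subset_Ici_self)
    simp only [← hF, ← hG] at h
    rw [intervalIntegral.integral_of_le hc, intervalIntegral.integral_of_le hc]
    exact h
  have hFg_lim : Tendsto (fun c => ∫ x in a..c, F x * g x) atTop
      (𝓝 (∫ x in Set.Ici a, F x * g x)) := by
    rw [MeasureTheory.integral_Ici_eq_integral_Ioi]
    exact MeasureTheory.intervalIntegral_tendsto_integral_Ioi a
      (hFg.mono_set Set.Ioi_subset_Ici_self) tendsto_id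
  have hmain : Tendsto (fun c => F c * G c - ∫ x in a..c, F x * g x) atTop
      (𝓝 (L - ∫ x in Set.Ici a, F x * g x)) := hlim.sub hFg_lim
  refine hmain.congr' ?_
  filter_upwards [eventually_ge_atTop a] with c hc
  linarith [key c hc]
end

section
/- Let a ∈ ℝ and let f : [a,∞) → ℝ be Lebesgue integrable on every compact subinterval of [a,∞) such that the improper integral ∫_a^∞ f exists. Let g : [a,∞) → ℝ be Lebesgue integrable on [a,∞) and of bounded variation on [a,∞); set F(x) := ∫_a^x f and G(x) := ∫_a^x g. Then Fg is Lebesgue integrable on [a,∞), lim_{x→∞} F(x)G(x) exists, the improper integral ∫_a^∞ fG exists, and ∫_a^∞ fG = lim_{x→∞} F(x)G(x) − ∫_a^∞ Fg. -/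
open MeasureTheory Filter Topology intervalIntegral

open Set in
/-- Fubini-based integration by parts on a bounded interval, in terms of set integrals. -/
lemma ibp_key (a c : ℝ) (f g : ℝ → ℝ)
    (hfi : IntegrableOn f (Ioc a c)) (hgi : IntegrableOn g (Ioc a c)) :
    (∫ x in Ioc a c, f x * ∫ t in Ioc a x, g t) +
      ∫ y in Ioc a c, (∫ t in Ioc a y, f t) * g y =
      (∫ x in Ioc a c, f x) * ∫ y in Ioc a c, g y := by
  set μ := volume.restrict (Ioc a c) with hμ
  have hD : MeasurableSet {p : ℝ × ℝ | p.1 < p.2} :=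
    measurableSet_lt measurable_fst measurable_snd
  set h : ℝ × ℝ → ℝ := fun p => f p.1 * g p.2 with hh
  have hInt : Integrable h (μ.prod μ) := hfi.mul_prod hgi
  have hIndD : Integrable ({p : ℝ × ℝ | p.1 < p.2}.indicator h) (μ.prod μ) :=
    hInt.indicator hD
  have hIndDc : Integrable ({p : ℝ × ℝ | p.1 < p.2}ᶜ.indicator h) (μ.prod μ) :=
    hInt.indicator hD.compl
  have htot : ∫ p, h p ∂(μ.prod μ) = (∫ x in Ioc a c, f x) * ∫ y in Ioc a c, g y :=
    integral_prod_mul f g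
  have hsplit : ∫ p, h p ∂(μ.prod μ)
      = (∫ p in {p : ℝ × ℝ | p.1 < p.2}, h p ∂(μ.prod μ))
        + ∫ p in {p : ℝ × ℝ | p.1 < p.2}ᶜ, h p ∂(μ.prod μ) :=
    (integral_add_compl hD hInt).symm
  have h1 : (∫ p in {p : ℝ × ℝ | p.1 < p.2}, h p ∂(μ.prod μ))
      = ∫ y in Ioc a c, (∫ t in Ioc a y, f t) * g y := by
    rw [← MeasureTheory.integral_indicator hD, integral_prod_symm _ hIndD]
    rw [hμ]
    refine setIntegral_congr_fun measurableSet_Ioc (fun y hy => ?_)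
    have hpt : (fun x => ({p : ℝ × ℝ | p.1 < p.2}.indicator h) (x, y))
        = (Iio y).indicator (fun x => f x * g y) := by
      funext x
      by_cases hxy : x < y <;> simp [Set.indicator_apply, hxy, hh]
    rw [hpt, setIntegral_indicator measurableSet_Iio]
    have hset : Ioc a c ∩ Iio y = Ioo a y := by
      ext x
      simp only [mem_inter_iff, mem_Ioc, mem_Iio, mem_Ioo]
      exact ⟨fun ⟨⟨h1, _⟩, h3⟩ => ⟨h1, h3⟩,
        fun ⟨h1, h3⟩ => ⟨⟨h1, h3.le.trans hy.2⟩, h3⟩⟩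
    rw [hset, MeasureTheory.integral_mul_const, ← integral_Ioc_eq_integral_Ioo]
  have h2 : (∫ p in {p : ℝ × ℝ | p.1 < p.2}ᶜ, h p ∂(μ.prod μ))
      = ∫ x in Ioc a c, f x * ∫ t in Ioc a x, g t := by
    rw [← MeasureTheory.integral_indicator hD.compl, integral_prod _ hIndDc]
    rw [hμ]
    refine setIntegral_congr_fun measurableSet_Ioc (fun x hx => ?_)
    have hpt : (fun y => ({p : ℝ × ℝ | p.1 < p.2}ᶜ.indicator h) (x, y))
        = (Iic x).indicator (fun y => f x * g y) := by
      funext y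
      by_cases hxy : x < y <;> simp [Set.indicator_apply, hxy, not_lt.mp, hh]
    rw [hpt, setIntegral_indicator measurableSet_Iic]
    have hset : Ioc a c ∩ Iic x = Ioc a x := by
      ext y
      simp only [mem_inter_iff, mem_Ioc, mem_Iic]
      exact ⟨fun ⟨⟨h1, _⟩, h3⟩ => ⟨h1, h3⟩,
        fun ⟨h1, h3⟩ => ⟨⟨h1, h3.trans hx.2⟩, h3⟩⟩
    rw [hset, MeasureTheory.integral_const_mul]
  rw [hsplit, h1, h2] at htot
  linarith

/-- **Integration by parts for the improper integral.**
Suppose `f` is Lebesgue integrable on every compact subinterval of `[a,∞)` and the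
improper integral `∫_a^∞ f` exists; let `g` be Lebesgue integrable and of bounded
variation on `[a,∞)`, with `F x = ∫_a^x f` and `G x = ∫_a^x g`. Then `F·g` is Lebesgue
integrable on `[a,∞)`, `lim_{x→∞} F x * G x` exists, the improper integral `∫_a^∞ f·G`
exists, and `∫_a^∞ f·G = lim_{x→∞} F x G x − ∫_a^∞ F·g`. -/
theorem integration_by_parts_improper (a : ℝ) (f g : ℝ → ℝ)
    (hf : ∀ c, a ≤ c → IntegrableOn f (Set.Icc a c))
    (F : ℝ → ℝ) (hF : ∀ x, F x = ∫ t in a..x, f t)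
    (hfimp : ∃ I : ℝ, Tendsto (fun c => ∫ x in a..c, f x) atTop (𝓝 I))
    (hg : IntegrableOn g (Set.Ici a))
    (hgBV : BoundedVariationOn g (Set.Ici a))
    (G : ℝ → ℝ) (hG : ∀ x, G x = ∫ t in a..x, g t) :
    IntegrableOn (fun x => F x * g x) (Set.Ici a) ∧
    ∃ L : ℝ, Tendsto (fun x => F x * G x) atTop (𝓝 L) ∧
      Tendsto (fun c => ∫ x in a..c, f x * G x) atTop
        (𝓝 (L - ∫ x in Set.Ici a, F x * g x)) := by
  obtain ⟨I, hI⟩ := hfimp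
  have hFun : F = fun c => ∫ x in a..c, f x := funext hF
  have hItend : Tendsto F atTop (𝓝 I) := by rw [hFun]; exact hI
  -- continuity of F on [a, ∞)
  have hFcont : ContinuousOn F (Set.Ici a) := by
    intro x hx
    have hx1 : a ≤ x := hx
    have hi : IntegrableOn f (Set.uIcc a (x + 1)) := by
      rw [Set.uIcc_of_le (by linarith)]
      exact hf (x + 1) (by linarith)
    have := intervalIntegral.continuousOn_primitive_interval (μ := volume) (a := a)
      (b := x + 1) (f := f) hi
    rw [Set.uIcc_of_le (by linarith)] at this
    have hmem : Set.Icc a (x + 1) ∈ 𝓝[Set.Ici a] x := by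
      have : Set.Iic (x + 1) ∈ 𝓝 x := Iic_mem_nhds (by linarith)
      have h2 : Set.Iic (x + 1) ∈ 𝓝[Set.Ici a] x := nhdsWithin_le_nhds this
      have h3 : Set.Ici a ∈ 𝓝[Set.Ici a] x := self_mem_nhdsWithin
      filter_upwards [h2, h3] with y hy hy' using ⟨hy', hy⟩
    have hcw : ContinuousWithinAt F (Set.Icc a (x + 1)) x := by
      rw [hFun]
      exact this x ⟨hx1, by linarith⟩
    exact hcw.mono_of_mem_nhdsWithin hmem
  -- boundedness of F on [a, ∞)
  obtain ⟨M, hM⟩ : ∃ M, ∀ x ∈ Set.Ici a, |F x| ≤ M := by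
    have hev : ∀ᶠ x in atTop, |F x| ≤ |I| + 1 := by
      have := hItend.abs.eventually (eventually_le_nhds (show |I| < |I| + 1 by linarith))
      exact this
    obtain ⟨N, hN⟩ := hev.exists_forall_of_atTop
    obtain ⟨C, hC⟩ := (isCompact_Icc (a := a) (b := max a N)).exists_bound_of_continuousOn
      (hFcont.mono (Set.Icc_subset_Ici_self))
    refine ⟨max (|I| + 1) C, fun x hx => ?_⟩
    rcases le_total x (max a N) with hxN | hxN
    · exact le_trans (by simpa using hC x ⟨hx, hxN⟩) (le_max_right _ _)
    · exact le_trans (hN x (le_trans (le_max_right a N) hxN)) (le_max_left _ _)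
  -- integrability of F * g on [a, ∞)
  have hFg : IntegrableOn (fun x => F x * g x) (Set.Ici a) := by
    have hmeas : AEStronglyMeasurable (fun x => F x * g x)
        (volume.restrict (Set.Ici a)) :=
      (hFcont.aestronglyMeasurable measurableSet_Ici).mul hg.1
    refine Integrable.mono' (hg.norm.const_mul M) hmeas ?_
    rw [ae_restrict_iff' measurableSet_Ici]
    filter_upwards with x hx
    have : |F x| ≤ M := hM x hx
    have h0 : (0:ℝ) ≤ |g x| := abs_nonneg _
    calc ‖F x * g x‖ = |F x| * |g x| := abs_mul _ _
      _ ≤ M * |g x| := by exact mul_le_mul_of_nonneg_right this h0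
      _ = M * ‖g x‖ := rfl
  refine ⟨hFg, ?_⟩
  -- limits
  set J : ℝ := ∫ x in Set.Ioi a, g x with hJ
  have hGtend : Tendsto G atTop (𝓝 J) := by
    have := intervalIntegral_tendsto_integral_Ioi a
      (hg.mono_set Set.Ioi_subset_Ici_self) tendsto_id
    refine this.congr (fun c => ?_)
    simp [hG c]
  set K : ℝ := ∫ x in Set.Ioi a, F x * g x with hK
  have hKIci : (∫ x in Set.Ici a, F x * g x) = K := integral_Ici_eq_integral_Ioi
  have hKtend : Tendsto (fun c => ∫ x in a..c, F x * g x) atTop (𝓝 K) :=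
    intervalIntegral_tendsto_integral_Ioi a (hFg.mono_set Set.Ioi_subset_Ici_self) tendsto_id
  refine ⟨I * J, hItend.mul hGtend, ?_⟩
  rw [hKIci]
  have hmain : Tendsto (fun c => F c * G c - ∫ x in a..c, F x * g x) atTop
      (𝓝 (I * J - K)) := (hItend.mul hGtend).sub hKtend
  have heq : (fun c => F c * G c - ∫ x in a..c, F x * g x)
      =ᶠ[atTop] fun c => ∫ x in a..c, f x * G x := by
    filter_upwards [eventually_ge_atTop a] with c hc
    have hfi : IntegrableOn f (Set.Ioc a c) := (hf c hc).mono_set Set.Ioc_subset_Icc_self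
    have hgi : IntegrableOn g (Set.Ioc a c) :=
      hg.mono_set (Set.Ioc_subset_Icc_self.trans Set.Icc_subset_Ici_self)
    have key := ibp_key a c f g hfi hgi
    have e1 : (∫ x in Set.Ioc a c, f x * G x)
        = ∫ x in Set.Ioc a c, f x * ∫ t in Set.Ioc a x, g t :=
      setIntegral_congr_fun measurableSet_Ioc
        (fun x hx => by rw [hG x, integral_of_le hx.1.le])
    have e2 : (∫ y in Set.Ioc a c, F y * g y)
        = ∫ y in Set.Ioc a c, (∫ t in Set.Ioc a y, f t) * g y :=
      setIntegral_congr_fun measurableSet_Ioc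
        (fun y hy => by rw [hF y, integral_of_le hy.1.le])
    rw [integral_of_le hc, integral_of_le hc, e1, e2, hF c, hG c,
      integral_of_le hc, integral_of_le hc]
    linarith [key]
  exact hmain.congr' heq
end

section
/- Let a ∈ ℝ and let f : [a,∞) → ℝ be Lebesgue integrable on every compact subinterval of [a,∞) such that the improper integral ∫_a^∞ f exists. Let (g_n) be a sequence of measurable functions on [a,∞), each Lebesgue integrable on [a,∞) and of bounded variation on [a,∞), with sup_n (‖g_n‖_{L¹[a,∞)} + V_{[a,∞)}[g_n]) < ∞. Set G_n(x) := ∫_a^x g_n and suppose G_n converges pointwise on [a,∞) to a function G. Then for each n the improper integral ∫_a^∞ fG_n exists, the improper integral ∫_a^∞ fG exists, and lim_{n→∞} ∫_a^∞ fG_n = ∫_a^∞ fG. -/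
open MeasureTheory Filter Topology intervalIntegral

set_option maxHeartbeats 1000000 in
/-- **Passing to the limit under the integral sign (Theorem `sequence of integrals`).**
Let `f` be Lebesgue integrable on compact subintervals of `[a,∞)` with convergent improper
integral `∫_a^∞ f`. Let `(gₙ)` be measurable functions on `[a,∞)`, each Lebesgue integrable
and of bounded variation on `[a,∞)`, with `supₙ (‖gₙ‖₁ + V_{[a,∞)}[gₙ]) < ∞`. If
`Gₙ x = ∫_a^x gₙ` converges pointwise on `[a,∞)` to `G`, then each improper integral
`∫_a^∞ f·Gₙ` exists, the improper integral `∫_a^∞ f·G` exists, and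
`limₙ ∫_a^∞ f·Gₙ = ∫_a^∞ f·G`. -/
theorem tendsto_improper_integral_of_uniform_bounded_variation
    (a : ℝ) (f : ℝ → ℝ) (g : ℕ → ℝ → ℝ) (G : ℝ → ℝ)
    (hf : ∀ c, a ≤ c → IntegrableOn f (Set.Icc a c))
    (hfimp : ∃ I : ℝ, Tendsto (fun c => ∫ x in a..c, f x) atTop (𝓝 I))
    (hgmeas : ∀ n, Measurable (g n))
    (hgint : ∀ n, IntegrableOn (g n) (Set.Ici a))
    (hgBV : ∀ n, BoundedVariationOn (g n) (Set.Ici a))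
    (hub : ∃ M : ℝ, ∀ n,
      (∫ x in Set.Ici a, |g n x|) + (eVariationOn (g n) (Set.Ici a)).toReal ≤ M)
    (hGconv : ∀ x, a ≤ x →
      Tendsto (fun n => ∫ t in a..x, g n t) atTop (𝓝 (G x))) :
    ∃ I : ℕ → ℝ, ∃ J : ℝ,
      (∀ n, Tendsto (fun c => ∫ x in a..c, f x * (∫ t in a..x, g n t)) atTop (𝓝 (I n))) ∧
      Tendsto (fun c => ∫ x in a..c, f x * G x) atTop (𝓝 J) ∧
      Tendsto I atTop (𝓝 J) := by
  classical
  obtain ⟨I₀, hI₀⟩ := hfimp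
  obtain ⟨M, hM⟩ := hub
  set F : ℝ → ℝ := fun c => ∫ x in a..c, f x with hFdef
  have hM0 : ∀ n, (∫ x in Set.Ici a, |g n x|) ≤ M := fun n =>
    le_trans (le_add_of_nonneg_right ENNReal.toReal_nonneg) (hM n)
  have hMnn : 0 ≤ M := le_trans (integral_nonneg fun x => abs_nonneg _) (hM0 0)
  have hIocIci : ∀ d : ℝ, Set.Ioc a d ⊆ Set.Ici a :=
    fun d => Set.Subset.trans Set.Ioc_subset_Icc_self Set.Icc_subset_Ici_self
  have hfint : ∀ c, a ≤ c → IntegrableOn f (Set.Ioc a c) :=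
    fun c hc => (hf c hc).mono_set Set.Ioc_subset_Icc_self
  have hgIoc : ∀ n c, IntegrableOn (g n) (Set.Ioc a c) :=
    fun n c => (hgint n).mono_set (hIocIci _)
  have habs_le : ∀ (n) (s : Set ℝ), s ⊆ Set.Ici a → (∫ t in s, |g n t|) ≤ M := by
    intro n s hsub
    refine le_trans (setIntegral_mono_set (hgint n).abs
      (Filter.Eventually.of_forall fun t => abs_nonneg _) (HasSubset.Subset.eventuallyLE hsub))
      (hM0 n)
  have hGb : ∀ n x, a ≤ x → |∫ t in a..x, g n t| ≤ M := by
    intro n x hx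
    calc |∫ t in a..x, g n t| ≤ ∫ t in a..x, |g n t| :=
          intervalIntegral.abs_integral_le_integral_abs hx
    _ = ∫ t in Set.Ioc a x, |g n t| := intervalIntegral.integral_of_le hx
    _ ≤ M := habs_le n _ (hIocIci _)
  -- continuity of the primitive F on [a, ∞)
  have hFcont : ContinuousOn F (Set.Ici a) := by
    intro x hx
    have hx1 : a ≤ x + 1 := le_trans hx (by linarith)
    have h1 : ContinuousOn (fun y => ∫ t in Set.Ioc a y, f t) (Set.Icc a (x + 1)) :=
      intervalIntegral.continuousOn_primitive (hf (x + 1) hx1)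
    have h2 : ContinuousOn F (Set.Icc a (x + 1)) := by
      refine h1.congr fun y hy => ?_
      exact intervalIntegral.integral_of_le hy.1
    have hmem : Set.Icc a (x + 1) ∈ 𝓝[Set.Ici a] x := by
      refine Filter.mem_of_superset (inter_mem self_mem_nhdsWithin
        (mem_nhdsWithin_of_mem_nhds (Iio_mem_nhds (by linarith : x < x + 1)))) ?_
      rintro y ⟨hy1, hy2⟩
      exact ⟨hy1, le_of_lt hy2⟩
    exact (h2 x ⟨hx, by linarith⟩).mono_of_mem_nhdsWithin hmem
  -- boundedness of F on [a, ∞)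
  have hFb : ∃ C, ∀ x, a ≤ x → |F x| ≤ C := by
    obtain ⟨c₁, hc₁⟩ := (Metric.tendsto_atTop.1 hI₀) 1 one_pos
    obtain ⟨C, hC⟩ := (isCompact_Icc :
      IsCompact (Set.Icc a (max a c₁))).exists_bound_of_continuousOn
      (hFcont.mono Set.Icc_subset_Ici_self)
    refine ⟨max C (|I₀| + 1), fun x hx => ?_⟩
    rcases le_or_gt x (max a c₁) with h | h
    · exact le_max_of_le_left (by simpa [Real.norm_eq_abs] using hC x ⟨hx, h⟩)
    · refine le_max_of_le_right ?_
      have hd := hc₁ x (le_of_lt (lt_of_le_of_lt (le_max_right a c₁) h))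
      rw [Real.dist_eq] at hd
      calc |F x| = |(F x - I₀) + I₀| := by ring_nf
      _ ≤ |F x - I₀| + |I₀| := abs_add_le _ _
      _ ≤ |I₀| + 1 := by linarith
  obtain ⟨C, hC⟩ := hFb
  have hFmeas : AEStronglyMeasurable F (volume.restrict (Set.Ici a)) :=
    hFcont.aestronglyMeasurable measurableSet_Ici
  have hgF : ∀ n, IntegrableOn (fun t => g n t * F t) (Set.Ici a) := by
    intro n
    refine Integrable.mono' ((hgint n).abs.const_mul C)
      (((hgmeas n).aestronglyMeasurable.restrict).mul hFmeas) ?_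
    filter_upwards [ae_restrict_mem measurableSet_Ici] with t ht
    rw [Real.norm_eq_abs, abs_mul]
    calc |g n t| * |F t| ≤ |g n t| * C :=
          mul_le_mul_of_nonneg_left (hC t ht) (abs_nonneg _)
    _ = C * |g n t| := mul_comm _ _
  have hii : ∀ b, a ≤ b → IntervalIntegrable f volume a b := fun b hb =>
    ((Set.uIcc_of_le hb).symm ▸ hf b hb).intervalIntegrable
  -- the Fubini identity
  have key : ∀ (n : ℕ) (c : ℝ), a ≤ c →
      (∫ x in a..c, f x * (∫ t in a..x, g n t))
        = F c * (∫ t in Set.Ioc a c, g n t) - ∫ t in Set.Ioc a c, g n t * F t := by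
    intro n c hc
    have hgc : IntegrableOn (g n) (Set.Ioc a c) := hgIoc n c
    have hfc : IntegrableOn f (Set.Ioc a c) := hfint c hc
    have hs : MeasurableSet {p : ℝ × ℝ | a < p.2 ∧ p.2 ≤ p.1} :=
      (measurableSet_lt measurable_const measurable_snd).inter
        (measurableSet_le measurable_snd measurable_fst)
    have hind : ∀ x t : ℝ, (Set.Ioc a x).indicator (g n) t
        = Set.indicator {p : ℝ × ℝ | a < p.2 ∧ p.2 ≤ p.1} (fun p => g n p.2) (x, t) := by
      intro x t
      simp [Set.indicator_apply, Set.mem_Ioc, Set.mem_setOf_eq]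
    have hprod : Integrable (Function.uncurry fun x t => f x * (Set.Ioc a x).indicator (g n) t)
        ((volume.restrict (Set.Ioc a c)).prod (volume.restrict (Set.Ioc a c))) := by
      have hbd : Integrable (fun p : ℝ × ℝ => |f p.1| * |g n p.2|)
          ((volume.restrict (Set.Ioc a c)).prod (volume.restrict (Set.Ioc a c))) :=
        hfc.abs.mul_prod hgc.abs
      refine Integrable.mono' hbd ?_ ?_
      · have h1 : AEStronglyMeasurable (fun p : ℝ × ℝ => f p.1)
            ((volume.restrict (Set.Ioc a c)).prod (volume.restrict (Set.Ioc a c))) :=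
          hfc.aestronglyMeasurable.comp_fst
        have h2 : AEStronglyMeasurable (fun p : ℝ × ℝ =>
            Set.indicator {p : ℝ × ℝ | a < p.2 ∧ p.2 ≤ p.1} (fun p => g n p.2) p)
            ((volume.restrict (Set.Ioc a c)).prod (volume.restrict (Set.Ioc a c))) :=
          (((hgmeas n).comp measurable_snd).indicator hs).aestronglyMeasurable
        have heq : (Function.uncurry fun x t => f x * (Set.Ioc a x).indicator (g n) t)
            = fun p : ℝ × ℝ => f p.1 * Set.indicator {p : ℝ × ℝ | a < p.2 ∧ p.2 ≤ p.1}
              (fun p => g n p.2) p := by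
          funext p
          exact congrArg (f p.1 * ·) (hind p.1 p.2)
        rw [heq]
        exact h1.mul h2
      · refine Filter.Eventually.of_forall fun p => ?_
        simp only [Function.uncurry]
        rw [Real.norm_eq_abs, abs_mul]
        refine mul_le_mul_of_nonneg_left ?_ (abs_nonneg _)
        simpa [Real.norm_eq_abs] using
          (norm_indicator_le_norm_self (s := Set.Ioc a p.1) (g n) p.2)
    calc (∫ x in a..c, f x * ∫ t in a..x, g n t)
        = ∫ x in Set.Ioc a c, f x * ∫ t in a..x, g n t :=
          intervalIntegral.integral_of_le hc
      _ = ∫ x in Set.Ioc a c, ∫ t in Set.Ioc a c, f x * (Set.Ioc a x).indicator (g n) t := by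
          refine setIntegral_congr_fun measurableSet_Ioc fun x hx => ?_
          rw [intervalIntegral.integral_of_le hx.1.le]
          have hindint : (∫ t in Set.Ioc a x, g n t)
              = ∫ t in Set.Ioc a c, (Set.Ioc a x).indicator (g n) t := by
            rw [setIntegral_indicator measurableSet_Ioc,
              Set.inter_eq_right.mpr (Set.Ioc_subset_Ioc_right hx.2)]
          rw [hindint, ← MeasureTheory.integral_const_mul]
      _ = ∫ t in Set.Ioc a c, ∫ x in Set.Ioc a c, f x * (Set.Ioc a x).indicator (g n) t :=
          integral_integral_swap hprod
      _ = ∫ t in Set.Ioc a c, (F c - F t) * g n t := by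
          refine setIntegral_congr_fun measurableSet_Ioc fun t ht => ?_
          have h1 : ∀ x, f x * (Set.Ioc a x).indicator (g n) t
              = (Set.Ici t).indicator (fun x => f x * g n t) x := by
            intro x
            by_cases h : t ≤ x
            · simp [Set.indicator_apply, Set.mem_Ioc, Set.mem_Ici, ht.1, h]
            · simp [Set.indicator_apply, Set.mem_Ioc, Set.mem_Ici, h]
          calc (∫ x in Set.Ioc a c, f x * (Set.Ioc a x).indicator (g n) t)
              = ∫ x in Set.Ioc a c, (Set.Ici t).indicator (fun x => f x * g n t) x :=
                setIntegral_congr_fun measurableSet_Ioc fun x _ => h1 x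
            _ = ∫ x in Set.Ioc a c ∩ Set.Ici t, f x * g n t :=
                setIntegral_indicator measurableSet_Ici
            _ = ∫ x in Set.Icc t c, f x * g n t := by
                have hseteq : Set.Ioc a c ∩ Set.Ici t = Set.Icc t c := by
                  ext x
                  simp only [Set.mem_inter_iff, Set.mem_Ioc, Set.mem_Icc, Set.mem_Ici]
                  constructor
                  · rintro ⟨⟨_, h2⟩, h3⟩; exact ⟨h3, h2⟩
                  · rintro ⟨h3, h2⟩; exact ⟨⟨lt_of_lt_of_le ht.1 h3, h2⟩, h3⟩
                rw [hseteq]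
            _ = ∫ x in Set.Ioc t c, f x * g n t := integral_Icc_eq_integral_Ioc
            _ = (∫ x in Set.Ioc t c, f x) * g n t := MeasureTheory.integral_mul_const _ _
            _ = (F c - F t) * g n t := by
                congr 1
                rw [← intervalIntegral.integral_of_le ht.2]
                exact (intervalIntegral.integral_interval_sub_left (hii c hc)
                  (hii t ht.1.le)).symm
      _ = F c * (∫ t in Set.Ioc a c, g n t) - ∫ t in Set.Ioc a c, g n t * F t := by
          have e1 : (∫ t in Set.Ioc a c, (F c - F t) * g n t)
              = ∫ t in Set.Ioc a c, (F c * g n t - g n t * F t) :=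
            setIntegral_congr_fun measurableSet_Ioc fun t _ => by ring
          rw [e1, MeasureTheory.integral_sub (hgc.const_mul (F c))
            ((hgF n).mono_set (hIocIci _)), MeasureTheory.integral_const_mul]
  -- part 1: convergence of each improper integral ∫ f·Gₙ
  have part1 : ∀ n, Tendsto (fun c => ∫ x in a..c, f x * (∫ t in a..x, g n t)) atTop
      (𝓝 (I₀ * (∫ t in Set.Ioi a, g n t) - ∫ t in Set.Ioi a, g n t * F t)) := by
    intro n
    have hgIoi : IntegrableOn (g n) (Set.Ioi a) := (hgint n).mono_set Set.Ioi_subset_Ici_self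
    have hgFIoi : IntegrableOn (fun t => g n t * F t) (Set.Ioi a) :=
      (hgF n).mono_set Set.Ioi_subset_Ici_self
    have h1 : Tendsto (fun c => ∫ t in Set.Ioc a c, g n t) atTop
        (𝓝 (∫ t in Set.Ioi a, g n t)) := by
      refine (intervalIntegral_tendsto_integral_Ioi a hgIoi tendsto_id).congr' ?_
      filter_upwards [eventually_ge_atTop a] with c hc
      exact intervalIntegral.integral_of_le hc
    have h2 : Tendsto (fun c => ∫ t in Set.Ioc a c, g n t * F t) atTop
        (𝓝 (∫ t in Set.Ioi a, g n t * F t)) := by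
      refine (intervalIntegral_tendsto_integral_Ioi a hgFIoi tendsto_id).congr' ?_
      filter_upwards [eventually_ge_atTop a] with c hc
      exact intervalIntegral.integral_of_le hc
    refine ((hI₀.mul h1).sub h2).congr' ?_
    filter_upwards [eventually_ge_atTop a] with c hc
    exact (key n c hc).symm
  -- the uniform (in n) estimate
  have claimA : ∀ ε : ℝ, 0 < ε → ∃ c₀, a ≤ c₀ ∧ ∀ n c, c₀ ≤ c →
      |(∫ x in a..c, f x * (∫ t in a..x, g n t))
        - (I₀ * (∫ t in Set.Ioi a, g n t) - ∫ t in Set.Ioi a, g n t * F t)| ≤ ε := by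
    intro ε hε
    set ε' := ε / (2 * (M + 1)) with hε'def
    have hM1 : (0:ℝ) < 2 * (M + 1) := by linarith
    have hε' : 0 < ε' := div_pos hε hM1
    obtain ⟨c₁, hc₁⟩ := (Metric.tendsto_atTop.1 hI₀) ε' hε'
    refine ⟨max a c₁, le_max_left _ _, fun n c hc => ?_⟩
    have hac : a ≤ c := le_trans (le_max_left _ _) hc
    have hc₁c : c₁ ≤ c := le_trans (le_max_right _ _) hc
    have hIoisub : Set.Ioi c ⊆ Set.Ici a := fun t ht => le_trans hac (le_of_lt ht)
    rw [key n c hac]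
    have hgIoi : IntegrableOn (g n) (Set.Ioi a) := (hgint n).mono_set Set.Ioi_subset_Ici_self
    have hgFIoi : IntegrableOn (fun t => g n t * F t) (Set.Ioi a) :=
      (hgF n).mono_set Set.Ioi_subset_Ici_self
    have hsplit : ∀ h : ℝ → ℝ, IntegrableOn h (Set.Ioi a) →
        (∫ t in Set.Ioi a, h t) = (∫ t in Set.Ioc a c, h t) + ∫ t in Set.Ioi c, h t := by
      intro h hint
      rw [← setIntegral_union (Set.Ioc_disjoint_Ioi le_rfl) measurableSet_Ioi
        (hint.mono_set Set.Ioc_subset_Ioi_self) (hint.mono_set (Set.Ioi_subset_Ioi hac)),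
        Set.Ioc_union_Ioi_eq_Ioi hac]
    have eK := hsplit (g n) hgIoi
    have eL := hsplit (fun t => g n t * F t) hgFIoi
    have e3 : (∫ t in Set.Ioi c, g n t * (I₀ - F t))
        = I₀ * (∫ t in Set.Ioi c, g n t) - ∫ t in Set.Ioi c, g n t * F t := by
      have e4 : (fun t => g n t * (I₀ - F t)) = fun t => I₀ * g n t - g n t * F t :=
        funext fun t => by ring
      rw [e4, MeasureTheory.integral_sub
        ((hgIoi.mono_set (Set.Ioi_subset_Ioi hac)).const_mul I₀)
        (hgFIoi.mono_set (Set.Ioi_subset_Ioi hac)), MeasureTheory.integral_const_mul]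
    have e2 : F c * (∫ t in Set.Ioc a c, g n t) - (∫ t in Set.Ioc a c, g n t * F t)
        - (I₀ * (∫ t in Set.Ioi a, g n t) - ∫ t in Set.Ioi a, g n t * F t)
        = (F c - I₀) * (∫ t in Set.Ioc a c, g n t)
          - ∫ t in Set.Ioi c, g n t * (I₀ - F t) := by
      rw [e3, eK, eL]; ring
    rw [e2]
    have hb1 : |∫ t in Set.Ioc a c, g n t| ≤ M := by
      calc |∫ t in Set.Ioc a c, g n t| ≤ ∫ t in Set.Ioc a c, |g n t| := by
            simpa [Real.norm_eq_abs] using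
              norm_integral_le_integral_norm (μ := volume.restrict (Set.Ioc a c)) (g n)
      _ ≤ M := habs_le n _ (hIocIci _)
    have hd1 : |F c - I₀| ≤ ε' := by
      have := hc₁ c hc₁c
      rw [Real.dist_eq] at this
      exact this.le
    have hb2 : |∫ t in Set.Ioi c, g n t * (I₀ - F t)| ≤ M * ε' := by
      have hbd : ‖∫ t in Set.Ioi c, g n t * (I₀ - F t)‖
          ≤ ∫ t in Set.Ioi c, |g n t| * ε' := by
        have habsIoi : IntegrableOn (fun t => |g n t|) (Set.Ici a) := (hgint n).abs
        refine norm_integral_le_of_norm_le ((habsIoi.mono_set hIoisub).mul_const ε') ?_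
        filter_upwards [ae_restrict_mem measurableSet_Ioi] with t ht
        rw [Real.norm_eq_abs, abs_mul]
        refine mul_le_mul_of_nonneg_left ?_ (abs_nonneg _)
        have hd := hc₁ t (le_of_lt (lt_of_le_of_lt hc₁c ht))
        rw [Real.dist_eq] at hd
        rw [abs_sub_comm]
        exact hd.le
      rw [Real.norm_eq_abs] at hbd
      refine le_trans hbd ?_
      rw [MeasureTheory.integral_mul_const]
      exact mul_le_mul_of_nonneg_right (habs_le n _ hIoisub) hε'.le
    have hεeq : ε' * (2 * (M + 1)) = ε := div_mul_cancel₀ ε hM1.ne'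
    calc |(F c - I₀) * (∫ t in Set.Ioc a c, g n t)
          - ∫ t in Set.Ioi c, g n t * (I₀ - F t)|
        ≤ |(F c - I₀) * (∫ t in Set.Ioc a c, g n t)|
          + |∫ t in Set.Ioi c, g n t * (I₀ - F t)| := abs_sub _ _
      _ ≤ ε' * M + M * ε' := by
          refine add_le_add ?_ hb2
          rw [abs_mul]
          exact mul_le_mul hd1 hb1 (abs_nonneg _) hε'.le
      _ ≤ ε := by nlinarith [hε'.le]
  -- dominated convergence on compact intervals
  have hDCT : ∀ c, a ≤ c → Tendsto (fun n => ∫ x in a..c, f x * (∫ t in a..x, g n t)) atTop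
      (𝓝 (∫ x in a..c, f x * G x)) := by
    intro c hc
    refine intervalIntegral.tendsto_integral_filter_of_dominated_convergence
      (fun x => M * |f x|) ?_ ?_ ?_ ?_
    · refine Eventually.of_forall fun n => ?_
      rw [Set.uIoc_of_le hc]
      have hGn : ContinuousOn (fun x => ∫ t in a..x, g n t) (Set.Icc a c) := by
        refine (intervalIntegral.continuousOn_primitive
          ((hgint n).mono_set Set.Icc_subset_Ici_self)).congr fun y hy => ?_
        exact intervalIntegral.integral_of_le hy.1
      exact (hfint c hc).aestronglyMeasurable.mul
        ((hGn.mono Set.Ioc_subset_Icc_self).aestronglyMeasurable measurableSet_Ioc)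
    · refine Eventually.of_forall fun n => ?_
      refine Filter.Eventually.of_forall fun x hx => ?_
      rw [Set.uIoc_of_le hc] at hx
      rw [Real.norm_eq_abs, abs_mul]
      calc |f x| * |∫ t in a..x, g n t| ≤ |f x| * M :=
            mul_le_mul_of_nonneg_left (hGb n x hx.1.le) (abs_nonneg _)
      _ = M * |f x| := mul_comm _ _
    · have hMint : IntegrableOn (fun x => M * |f x|) (Set.uIcc a c) := by
        rw [Set.uIcc_of_le hc]
        exact (hf c hc).abs.const_mul M
      exact hMint.intervalIntegrable
    · refine Filter.Eventually.of_forall fun x hx => ?_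
      rw [Set.uIoc_of_le hc] at hx
      exact (hGconv x hx.1.le).const_mul (f x)
  -- the sequence of improper integrals is Cauchy
  have hcauchy : CauchySeq (fun n =>
      I₀ * (∫ t in Set.Ioi a, g n t) - ∫ t in Set.Ioi a, g n t * F t) := by
    rw [Metric.cauchySeq_iff]
    intro ε hε
    obtain ⟨c₀, hc₀a, hc₀⟩ := claimA (ε / 5) (by linarith)
    obtain ⟨N, hN⟩ := (Metric.tendsto_atTop.1 (hDCT c₀ hc₀a)) (ε / 5) (by linarith)
    refine ⟨N, fun m hm n hn => ?_⟩
    have h1 := hc₀ m c₀ le_rfl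
    have h2 := hc₀ n c₀ le_rfl
    have h3 := hN m hm
    have h4 := hN n hn
    rw [Real.dist_eq] at h3 h4 ⊢
    set Im := I₀ * (∫ t in Set.Ioi a, g m t) - ∫ t in Set.Ioi a, g m t * F t with hIm
    set In := I₀ * (∫ t in Set.Ioi a, g n t) - ∫ t in Set.Ioi a, g n t * F t with hIn
    set Hm := ∫ x in a..c₀, f x * (∫ t in a..x, g m t) with hHm
    set Hn := ∫ x in a..c₀, f x * (∫ t in a..x, g n t) with hHn
    set Lv := ∫ x in a..c₀, f x * G x with hLv
    have k1 : |Im - Hm| = |Hm - Im| := abs_sub_comm _ _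
    have k2 : |Lv - Hn| = |Hn - Lv| := abs_sub_comm _ _
    calc |Im - In| ≤ |Im - Hm| + |Hm - In| := abs_sub_le _ _ _
      _ ≤ |Im - Hm| + (|Hm - Lv| + |Lv - In|) := by
          linarith [abs_sub_le Hm Lv In]
      _ ≤ |Im - Hm| + (|Hm - Lv| + (|Lv - Hn| + |Hn - In|)) := by
          linarith [abs_sub_le Lv Hn In]
      _ < ε := by
          rw [k1, k2]
          linarith
  obtain ⟨J, hJ⟩ := cauchySeq_tendsto_of_complete hcauchy
  refine ⟨fun n => I₀ * (∫ t in Set.Ioi a, g n t) - ∫ t in Set.Ioi a, g n t * F t,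
    J, part1, ?_, hJ⟩
  -- convergence of the improper integral of f·G to J
  rw [Metric.tendsto_atTop]
  intro ε hε
  obtain ⟨c₀, hc₀a, hc₀⟩ := claimA (ε / 4) (by linarith)
  refine ⟨c₀, fun c hc => ?_⟩
  have hac : a ≤ c := le_trans hc₀a hc
  obtain ⟨N₁, h1⟩ := (Metric.tendsto_atTop.1 (hDCT c hac)) (ε / 4) (by linarith)
  obtain ⟨N₂, h2⟩ := (Metric.tendsto_atTop.1 hJ) (ε / 4) (by linarith)
  set n := max N₁ N₂ with hn
  have hh1 := h1 n (le_max_left _ _)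
  have hh2 := h2 n (le_max_right _ _)
  have hh3 := hc₀ n c hc
  rw [Real.dist_eq] at hh1 hh2 ⊢
  set Hc := ∫ x in a..c, f x * G x with hHc
  set Hnc := ∫ x in a..c, f x * (∫ t in a..x, g n t) with hHnc
  set In := I₀ * (∫ t in Set.Ioi a, g n t) - ∫ t in Set.Ioi a, g n t * F t with hIn
  have k1 : |Hc - Hnc| = |Hnc - Hc| := abs_sub_comm _ _
  calc |Hc - J| ≤ |Hc - Hnc| + |Hnc - J| := abs_sub_le _ _ _
    _ ≤ |Hc - Hnc| + (|Hnc - In| + |In - J|) := by linarith [abs_sub_le Hnc In J]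
    _ < ε := by rw [k1]; linarith
end

section
/- Let f : ℝ → ℝ be Lebesgue integrable on every compact interval such that the improper integral F(x) := ∫_{-∞}^x f exists for every x ∈ ℝ and the improper integral ∫_{-∞}^∞ f exists. Let g : ℝ → ℝ be Lebesgue integrable on ℝ and of bounded variation on ℝ, and set G(x) := ∫_{-∞}^x g. Assume F and G are Lebesgue integrable on ℝ and lim_{x→∞} G(x) = 0. Then: (1) for every x ∈ ℝ the improper integral (f*G)(x) := ∫_{-∞}^∞ f(x−y)G(y) dy exists and equals (F*g)(x) = ∫_{-∞}^∞ F(x−y)g(y) dy; (2) for every t ∈ ℝ, ∫_{-∞}^t ∫_{-∞}^∞ f(x−y)G(y) dy dx = ∫_{-∞}^∞ ∫_{-∞}^t f(x−y)G(y) dx dy (the integrals in x being improper); (3) ‖f*G‖_{L¹(ℝ)} ≤ ‖F‖_{L¹(ℝ)} ‖g‖_{L¹(ℝ)} and ‖f*G‖_A ≤ ‖f‖_A ‖G‖_{L¹(ℝ)}, where ‖h‖_A := sup_{t∈ℝ} |∫_{-∞}^t h| (improper integrals, the Alexiewicz norm). -/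
open MeasureTheory Filter Topology intervalIntegral

/-- The improper integral `∫_{-∞}^∞ h = L`. -/
def HasImpInt (h : ℝ → ℝ) (L : ℝ) : Prop :=
  ∃ L₁ L₂ : ℝ,
    Tendsto (fun c => ∫ x in c..(0:ℝ), h x) atBot (𝓝 L₁) ∧
    Tendsto (fun c => ∫ x in (0:ℝ)..c, h x) atTop (𝓝 L₂) ∧ L = L₁ + L₂

lemma aux_ibp {f F g G : ℝ → ℝ}
    (hfloc : ∀ c d : ℝ, IntervalIntegrable f volume c d)
    (hFab : ∀ a b : ℝ, (∫ u in a..b, f u) = F b - F a)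
    (hFcont : Continuous F)
    (hg : Integrable g)
    (hGab : ∀ a b : ℝ, (∫ s in a..b, g s) = G b - G a)
    (hGcont : Continuous G)
    (x c d : ℝ) (hcd : c ≤ d) :
    ∫ y in c..d, f (x - y) * G y
      = F (x - c) * G c - F (x - d) * G d + ∫ y in c..d, F (x - y) * g y := by
  have hφ : IntervalIntegrable (fun y => f (x - y)) volume c d := by
    have := (hfloc (x - c) (x - d)).comp_sub_left x
    simpa using this
  have hφIoc : IntegrableOn (fun y => f (x - y)) (Set.Ioc c d) volume := hφ.1
  have hφIcc : IntegrableOn (fun y => f (x - y)) (Set.Icc c d) volume := by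
    rwa [integrableOn_Icc_iff_integrableOn_Ioc]
  have hFx : ∀ a b : ℝ, (∫ y in a..b, f (x - y)) = F (x - a) - F (x - b) := by
    intro a b
    rw [intervalIntegral.integral_comp_sub_left (fun u => f u) x, hFab]
  set J : ℝ → ℝ → ℝ := fun y s => Set.indicator (Set.Iic y) (fun s => f (x - y) * g s) s with hJ
  have hJeq : Function.uncurry J
      = Set.indicator {p : ℝ × ℝ | p.2 ≤ p.1} (fun p => f (x - p.1) * g p.2) := by
    funext p
    simp only [Function.uncurry, hJ, Set.indicator_apply, Set.mem_Iic, Set.mem_setOf_eq]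
  have hg' : Integrable g (volume.restrict (Set.Ioc c d)) := hg.restrict
  have hmeasJ : AEStronglyMeasurable (Function.uncurry J)
      ((volume.restrict (Set.Ioc c d)).prod (volume.restrict (Set.Ioc c d))) := by
    rw [hJeq]
    refine AEStronglyMeasurable.indicator ?_
      ((isClosed_le continuous_snd continuous_fst).measurableSet)
    exact (hφIoc.aestronglyMeasurable.comp_quasiMeasurePreserving
        Measure.quasiMeasurePreserving_fst).mul
      (hg'.aestronglyMeasurable.comp_quasiMeasurePreserving Measure.quasiMeasurePreserving_snd)
  have hJint : Integrable (Function.uncurry J)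
      ((volume.restrict (Set.Ioc c d)).prod (volume.restrict (Set.Ioc c d))) := by
    refine Integrable.mono' (hφIoc.norm.mul_prod hg'.norm) hmeasJ
      (Filter.Eventually.of_forall fun p => ?_)
    rw [hJeq]
    refine (norm_indicator_le_norm_self _ _).trans ?_
    rw [norm_mul]
  have swap := MeasureTheory.integral_integral_swap (f := J) hJint
  have hL : (∫ y in Set.Ioc c d, ∫ s in Set.Ioc c d, J y s)
      = ∫ y in Set.Ioc c d, f (x - y) * (G y - G c) := by
    refine setIntegral_congr_fun measurableSet_Ioc (fun y hy => ?_)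
    have hset : Set.Iic y ∩ Set.Ioc c d = Set.Ioc c y := by
      ext s
      simp only [Set.mem_inter_iff, Set.mem_Iic, Set.mem_Ioc]
      exact ⟨fun h => ⟨h.2.1, h.1⟩, fun h => ⟨h.2, h.1, h.2.trans hy.2⟩⟩
    calc ∫ s in Set.Ioc c d, J y s
        = ∫ s in Set.Iic y ∩ Set.Ioc c d, f (x - y) * g s := by
          rw [hJ]
          rw [MeasureTheory.integral_indicator measurableSet_Iic,
            Measure.restrict_restrict measurableSet_Iic]
      _ = f (x - y) * ∫ s in Set.Ioc c y, g s := by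
          rw [hset, MeasureTheory.integral_const_mul]
      _ = f (x - y) * (G y - G c) := by
          rw [← intervalIntegral.integral_of_le hy.1.le, hGab]
  have hR : (∫ s in Set.Ioc c d, ∫ y in Set.Ioc c d, J y s)
      = ∫ s in Set.Ioc c d, (F (x - s) - F (x - d)) * g s := by
    refine setIntegral_congr_fun measurableSet_Ioc (fun s hs => ?_)
    have e : ∀ y : ℝ, J y s = (Set.Ici s).indicator (fun y => f (x - y) * g s) y := by
      intro y
      simp only [hJ, Set.indicator_apply, Set.mem_Iic, Set.mem_Ici]
    have hset : Set.Ici s ∩ Set.Ioc c d = Set.Icc s d := by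
      ext y
      simp only [Set.mem_inter_iff, Set.mem_Ici, Set.mem_Ioc, Set.mem_Icc]
      exact ⟨fun h => ⟨h.1, h.2.2⟩, fun h => ⟨h.1, hs.1.trans_le h.1, h.2⟩⟩
    calc ∫ y in Set.Ioc c d, J y s
        = ∫ y in Set.Ioc c d, (Set.Ici s).indicator (fun y => f (x - y) * g s) y :=
          MeasureTheory.integral_congr_ae (Filter.Eventually.of_forall e)
      _ = ∫ y in Set.Ici s ∩ Set.Ioc c d, f (x - y) * g s := by
          rw [MeasureTheory.integral_indicator measurableSet_Ici,
            Measure.restrict_restrict measurableSet_Ici]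
      _ = (∫ y in Set.Icc s d, f (x - y)) * g s := by
          rw [hset, MeasureTheory.integral_mul_const]
      _ = (F (x - s) - F (x - d)) * g s := by
          rw [MeasureTheory.integral_Icc_eq_integral_Ioc,
            ← intervalIntegral.integral_of_le hs.2, hFx]
  -- split LHS
  have hint1 : IntegrableOn (fun y => f (x - y) * (G y - G c)) (Set.Ioc c d) volume := by
    have hGc : ContinuousOn (fun y : ℝ => G y - G c) (Set.Icc c d) :=
      (hGcont.sub continuous_const).continuousOn
    exact (hφIcc.mul_continuousOn hGc isCompact_Icc).mono_set Set.Ioc_subset_Icc_self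
  have hsplitL : ∫ y in Set.Ioc c d, f (x - y) * G y
      = (∫ y in Set.Ioc c d, f (x - y) * (G y - G c))
        + G c * ∫ y in Set.Ioc c d, f (x - y) := by
    rw [← MeasureTheory.integral_const_mul, ← MeasureTheory.integral_add hint1
      ((hφIoc.const_mul (G c)))]
    exact MeasureTheory.integral_congr_ae (Filter.Eventually.of_forall fun y => by ring)
  have hFgInt : IntegrableOn (fun s => F (x - s) * g s) (Set.Ioc c d) volume := by
    have : ContinuousOn (fun s => F (x - s)) (Set.Icc c d) :=
      (hFcont.comp (continuous_const.sub continuous_id)).continuousOn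
    exact ((hg.integrableOn.mono_set (Set.subset_univ _)).continuousOn_mul this
      isCompact_Icc).mono_set Set.Ioc_subset_Icc_self
  have hsplitR : ∫ s in Set.Ioc c d, (F (x - s) - F (x - d)) * g s
      = (∫ s in Set.Ioc c d, F (x - s) * g s) - F (x - d) * (G d - G c) := by
    have h2 : IntegrableOn (fun s => F (x - d) * g s) (Set.Ioc c d) volume :=
      hg.integrableOn.const_mul _
    rw [← hGab c d, intervalIntegral.integral_of_le hcd, ← MeasureTheory.integral_const_mul,
      ← MeasureTheory.integral_sub hFgInt h2]
    exact MeasureTheory.integral_congr_ae (Filter.Eventually.of_forall fun s => by ring)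
  have hIoc : ∫ y in Set.Ioc c d, f (x - y) = F (x - c) - F (x - d) := by
    rw [← intervalIntegral.integral_of_le hcd, hFx]
  rw [intervalIntegral.integral_of_le hcd, intervalIntegral.integral_of_le hcd, hsplitL, ← hL,
    swap, hR, hsplitR, hIoc]
  ring


/-- **Theorem `Four-Conv-Lem`.** Let `f` have improper primitive `F x = ∫_{-∞}^x f` and
convergent improper integral over `ℝ`; let `g ∈ L¹ ∩ BV(ℝ)` with `G x = ∫_{-∞}^x g`;
assume `F, G ∈ L¹(ℝ)` and `G(∞) = 0`. Then `(f*G)(x)` exists as an improper integral and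
equals `(F*g)(x)`; the iterated integrals `∫_{-∞}^t ∫_{-∞}^∞ f(x−y)G(y) dy dx` and
`∫_{-∞}^∞ ∫_{-∞}^t f(x−y)G(y) dx dy` agree; and `‖f*G‖₁ ≤ ‖F‖₁‖g‖₁`,
`‖f*G‖_A ≤ ‖f‖_A‖G‖₁`. -/
theorem convolution_transfer (f g F G : ℝ → ℝ)
    (hfloc : ∀ c d : ℝ, IntervalIntegrable f volume c d)
    (hF : ∀ x : ℝ, Tendsto (fun c => ∫ t in c..x, f t) atBot (𝓝 (F x)))
    (hfimp : ∃ L : ℝ, Tendsto (fun c => ∫ t in (0:ℝ)..c, f t) atTop (𝓝 L))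
    (hg : Integrable g) (hgBV : BoundedVariationOn g Set.univ)
    (hG : ∀ x : ℝ, G x = ∫ t in Set.Iic x, g t)
    (hFint : Integrable F) (hGint : Integrable G)
    (hG0 : Tendsto G atTop (𝓝 0)) :
    ∃ h : ℝ → ℝ,
      (∀ x : ℝ, HasImpInt (fun y => f (x - y) * G y) (h x) ∧
        h x = ∫ y : ℝ, F (x - y) * g y) ∧
      (∀ t : ℝ, ∃ Φ : ℝ → ℝ,
        (∀ y : ℝ, Tendsto (fun c => ∫ x in c..t, f (x - y) * G y) atBot (𝓝 (Φ y))) ∧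
        Integrable Φ ∧
        Tendsto (fun c => ∫ x in c..t, h x) atBot (𝓝 (∫ y : ℝ, Φ y))) ∧
      Integrable h ∧
      (∫ x : ℝ, |h x|) ≤ (∫ x : ℝ, |F x|) * (∫ x : ℝ, |g x|) ∧
      (⨆ t : ℝ, |∫ x in Set.Iic t, h x|) ≤ (⨆ t : ℝ, |F t|) * ∫ x : ℝ, |G x| := by

  -- basic facts about F
  have hFab : ∀ a b : ℝ, (∫ u in a..b, f u) = F b - F a := by
    intro a b
    have h2 : Tendsto (fun c => ∫ t in c..b, f t) atBot
        (𝓝 (F a + ∫ u in a..b, f u)) := by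
      have e : ∀ c : ℝ, (∫ t in c..a, f t) + (∫ u in a..b, f u) = ∫ t in c..b, f t :=
        fun c => intervalIntegral.integral_add_adjacent_intervals (hfloc c a) (hfloc a b)
      exact Tendsto.congr e ((hF a).add tendsto_const_nhds)
    have := tendsto_nhds_unique (hF b) h2
    linarith
  have hFcont : Continuous F := by
    have h1 : Continuous fun b => ∫ u in (0:ℝ)..b, f u :=
      intervalIntegral.continuous_primitive hfloc 0
    have e : F = fun b => F 0 + ∫ u in (0:ℝ)..b, f u := by
      funext b; rw [hFab 0 b]; ring
    rw [e]; exact continuous_const.add h1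
  have hFbot : Tendsto F atBot (𝓝 0) := by
    have e : ∀ c : ℝ, F 0 - (∫ t in c..(0:ℝ), f t) = F c := fun c => by
      rw [hFab c 0]; ring
    have h2 : Tendsto (fun c : ℝ => F 0 - ∫ t in c..(0:ℝ), f t) atBot (𝓝 (F 0 - F 0)) :=
      tendsto_const_nhds.sub (hF 0)
    simpa using Tendsto.congr e h2
  obtain ⟨L, hLtop⟩ := hfimp
  have hFtop : Tendsto F atTop (𝓝 (F 0 + L)) := by
    have e : ∀ c : ℝ, F 0 + (∫ t in (0:ℝ)..c, f t) = F c := fun c => by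
      rw [hFab 0 c]; ring
    exact Tendsto.congr e (tendsto_const_nhds.add hLtop)
  have hFbdd : ∃ M : ℝ, ∀ z : ℝ, |F z| ≤ M := by
    have h1 : ∀ᶠ z in atTop, |F z| ≤ |F 0 + L| + 1 :=
      hFtop.abs.eventually (eventually_le_nhds (lt_add_one _))
    have h2 : ∀ᶠ z in atBot, |F z| ≤ 1 := by
      have := hFbot.abs
      rw [abs_zero] at this
      exact this.eventually (eventually_le_nhds one_pos)
    obtain ⟨A, hA⟩ := h1.exists_forall_of_atTop
    obtain ⟨B, hB⟩ := h2.exists_forall_of_atBot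
    obtain ⟨C, hC⟩ := (isCompact_Icc (a := B) (b := A)).exists_bound_of_continuousOn
      hFcont.continuousOn
    refine ⟨max C (max (|F 0 + L| + 1) 1), fun z => ?_⟩
    rcases le_total z B with hzB | hzB
    · exact (hB z hzB).trans (le_max_of_le_right (le_max_right _ _))
    rcases le_total A z with hzA | hzA
    · exact (hA z hzA).trans (le_max_of_le_right (le_max_left _ _))
    · have := hC z ⟨hzB, hzA⟩
      rw [Real.norm_eq_abs] at this
      exact this.trans (le_max_left _ _)
  obtain ⟨M, hM⟩ := hFbdd
  -- basic facts about G
  have hGab : ∀ a b : ℝ, (∫ s in a..b, g s) = G b - G a := by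
    intro a b
    rw [hG a, hG b]
    exact (integral_Iic_sub_Iic hg.integrableOn hg.integrableOn).symm
  have hGcont : Continuous G := by
    have h1 : Continuous fun b => ∫ u in (0:ℝ)..b, g u :=
      intervalIntegral.continuous_primitive (fun a b => hg.intervalIntegrable) 0
    have e : G = fun b => G 0 + ∫ u in (0:ℝ)..b, g u := by
      funext b; rw [hGab 0 b]; ring
    rw [e]; exact continuous_const.add h1
  have hGbot : Tendsto G atBot (𝓝 0) := by
    have key : Tendsto (fun y => ∫ s, (Set.Iic y).indicator g s) atBot (𝓝 (∫ _ : ℝ, (0:ℝ))) := by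
      refine tendsto_integral_filter_of_dominated_convergence (fun s => |g s|) ?_ ?_ hg.abs ?_
      · exact Eventually.of_forall fun y => hg.aestronglyMeasurable.indicator measurableSet_Iic
      · refine Eventually.of_forall fun y => ae_of_all _ fun s => ?_
        simpa [Real.norm_eq_abs] using
          (norm_indicator_le_norm_self (f := g) (s := Set.Iic y) (a := s))
      · refine ae_of_all _ fun s => ?_
        have ev : ∀ᶠ y in atBot, (Set.Iic y).indicator g s = 0 := by
          filter_upwards [eventually_lt_atBot s] with y hy
          exact Set.indicator_of_notMem (by simpa using hy.not_ge) _
        exact Tendsto.congr' (EventuallyEq.symm ev) tendsto_const_nhds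
    have e : (fun y => ∫ s, (Set.Iic y).indicator g s) = G := by
      funext y
      rw [MeasureTheory.integral_indicator measurableSet_Iic, ← hG y]
    rw [e] at key
    simpa using key
  -- the convolution h = F * g
  have hFg_int : ∀ x : ℝ, Integrable (fun y => F (x - y) * g y) volume := fun x =>
    hg.bdd_mul ((hFcont.comp (continuous_const.sub continuous_id)).aestronglyMeasurable)
      (ae_of_all _ fun y => by rw [Real.norm_eq_abs]; exact hM _)
  set h : ℝ → ℝ := fun x => ∫ y, F (x - y) * g y with hh
  have hK : Integrable (fun p : ℝ × ℝ => F (p.1 - p.2) * g p.2) (volume.prod volume) := by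
    have h1 := hg.convolution_integrand (ContinuousLinearMap.mul ℝ ℝ) hFint
    refine h1.congr (ae_of_all _ fun p => ?_)
    simp only [ContinuousLinearMap.mul_apply']
    ring
  have hInt_h : Integrable h := hK.integral_prod_left
  -- iterated integral identity
  have key2 : ∀ t : ℝ, (∫ x in Set.Iic t, h x) = ∫ y, F (t - y) * G y := by
    intro t
    have e1 : (volume.restrict (Set.Iic t)).prod (volume : Measure ℝ)
        = (volume.prod volume).restrict (Set.Iic t ×ˢ Set.univ) := by
      rw [← Measure.prod_restrict, Measure.restrict_univ]
    have hK1 : Integrable (Function.uncurry fun x y => F (x - y) * g y)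
        ((volume.restrict (Set.Iic t)).prod volume) := by
      rw [e1]; exact hK.restrict
    have swap1 := MeasureTheory.integral_integral_swap hK1
    have trans1 : ∀ y : ℝ, (∫ x in Set.Iic t, F (x - y)) = ∫ u in Set.Iic (t - y), F u := by
      intro y
      calc (∫ x in Set.Iic t, F (x - y))
          = ∫ x, (Set.Iic t).indicator (fun x => F (x - y)) x :=
            (MeasureTheory.integral_indicator measurableSet_Iic).symm
        _ = ∫ x, (Set.Iic (t - y)).indicator F (x - y) := by
            congr 1; funext u
            simp only [Set.indicator_apply, Set.mem_Iic, sub_le_sub_iff_right]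
        _ = ∫ x, (Set.Iic (t - y)).indicator F x :=
            integral_sub_right_eq_self ((Set.Iic (t - y)).indicator F) y
        _ = _ := MeasureTheory.integral_indicator measurableSet_Iic
    have lhs : (∫ x in Set.Iic t, h x) = ∫ y, (∫ u in Set.Iic (t - y), F u) * g y := by
      rw [hh]
      rw [swap1]
      refine MeasureTheory.integral_congr_ae (ae_of_all _ fun y => ?_)
      show (∫ x in Set.Iic t, F (x - y) * g y) = (∫ u in Set.Iic (t - y), F u) * g y
      rw [MeasureTheory.integral_mul_const, trans1 y]
    set W : ℝ → ℝ → ℝ := fun y s => (Set.Iic y).indicator (fun s => F (t - y) * g s) s with hW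
    have hWeq : Function.uncurry W
        = Set.indicator {p : ℝ × ℝ | p.2 ≤ p.1} (fun p => F (t - p.1) * g p.2) := by
      funext p
      simp only [Function.uncurry, hW, Set.indicator_apply, Set.mem_Iic, Set.mem_setOf_eq]
    have hWmeas : AEStronglyMeasurable (Function.uncurry W) (volume.prod volume) := by
      rw [hWeq]
      refine AEStronglyMeasurable.indicator ?_
        ((isClosed_le continuous_snd continuous_fst).measurableSet)
      exact ((hFcont.comp (continuous_const.sub continuous_fst)).aestronglyMeasurable).mul
        (hg.aestronglyMeasurable.comp_quasiMeasurePreserving Measure.quasiMeasurePreserving_snd)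
    have hFtransInt : Integrable (fun y => F (t - y)) volume := hFint.comp_sub_left t
    have hWint : Integrable (Function.uncurry W) (volume.prod volume) := by
      refine Integrable.mono' (hFtransInt.norm.mul_prod hg.norm) hWmeas
        (Eventually.of_forall fun p => ?_)
      rw [hWeq]
      refine (norm_indicator_le_norm_self _ _).trans ?_
      rw [norm_mul]
    have swap2 := MeasureTheory.integral_integral_swap hWint
    have rhs1 : (∫ y, F (t - y) * G y) = ∫ y, ∫ s, W y s := by
      refine MeasureTheory.integral_congr_ae (ae_of_all _ fun y => ?_)
      show F (t - y) * G y = ∫ s, (Set.Iic y).indicator (fun s => F (t - y) * g s) s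
      rw [MeasureTheory.integral_indicator measurableSet_Iic,
        MeasureTheory.integral_const_mul, ← hG y]
    have trans2 : ∀ s : ℝ, (∫ y in Set.Ici s, F (t - y)) = ∫ u in Set.Iic (t - s), F u := by
      intro s
      calc (∫ y in Set.Ici s, F (t - y))
          = ∫ y, (Set.Ici s).indicator (fun y => F (t - y)) y :=
            (MeasureTheory.integral_indicator measurableSet_Ici).symm
        _ = ∫ y, (Set.Iic (t - s)).indicator F (t - y) := by
            congr 1; funext u
            simp only [Set.indicator_apply, Set.mem_Ici, Set.mem_Iic, sub_le_sub_iff_left]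
        _ = ∫ y, (Set.Iic (t - s)).indicator F y :=
            integral_sub_left_eq_self ((Set.Iic (t - s)).indicator F) volume t
        _ = _ := MeasureTheory.integral_indicator measurableSet_Iic
    have rhs2 : (∫ s, ∫ y, W y s) = ∫ s, (∫ u in Set.Iic (t - s), F u) * g s := by
      refine MeasureTheory.integral_congr_ae (ae_of_all _ fun s => ?_)
      have e : ∀ y : ℝ, W y s = (Set.Ici s).indicator (fun y => F (t - y) * g s) y := by
        intro y
        simp only [hW, Set.indicator_apply, Set.mem_Iic, Set.mem_Ici]
      show (∫ y, W y s) = (∫ u in Set.Iic (t - s), F u) * g s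
      rw [MeasureTheory.integral_congr_ae (ae_of_all _ e),
        MeasureTheory.integral_indicator measurableSet_Ici,
        MeasureTheory.integral_mul_const, trans2 s]
    rw [lhs, rhs1, swap2, rhs2]
  -- part 1 : improper integral
  have part1 : ∀ x : ℝ, HasImpInt (fun y => f (x - y) * G y) (h x) := by
    intro x
    refine ⟨(0 - F x * G 0) + ∫ y in Set.Iic 0, F (x - y) * g y,
      (F x * G 0 - 0) + ∫ y in Set.Ioi 0, F (x - y) * g y, ?_, ?_, ?_⟩
    · have hev : ∀ᶠ c in atBot, (F (x - c) * G c - F x * G 0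
          + ∫ y in c..(0:ℝ), F (x - y) * g y) = ∫ y in c..(0:ℝ), f (x - y) * G y := by
        filter_upwards [eventually_le_atBot (0:ℝ)] with c hc
        have := aux_ibp hfloc hFab hFcont hg hGab hGcont x c 0 hc
        rw [this]
        simp
      have t1 : Tendsto (fun c => F (x - c) * G c) atBot (𝓝 0) := by
        refine squeeze_zero_norm (a := fun c => M * |G c|) (fun c => ?_) ?_
        · rw [Real.norm_eq_abs, abs_mul]
          exact mul_le_mul_of_nonneg_right (hM _) (abs_nonneg _)
        · have h2 : Tendsto (fun c => M * |G c|) atBot (𝓝 (M * |(0:ℝ)|)) :=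
            (hGbot.abs).const_mul M
          simpa using h2
      have t2 : Tendsto (fun c => ∫ y in c..(0:ℝ), F (x - y) * g y) atBot
          (𝓝 (∫ y in Set.Iic 0, F (x - y) * g y)) :=
        intervalIntegral_tendsto_integral_Iic 0 (hFg_int x).integrableOn tendsto_id
      exact Tendsto.congr' hev (((t1.sub tendsto_const_nhds).add t2))
    · have hev : ∀ᶠ d in atTop, (F x * G 0 - F (x - d) * G d
          + ∫ y in (0:ℝ)..d, F (x - y) * g y) = ∫ y in (0:ℝ)..d, f (x - y) * G y := by
        filter_upwards [eventually_ge_atTop (0:ℝ)] with d hd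
        have := aux_ibp hfloc hFab hFcont hg hGab hGcont x 0 d hd
        rw [this]
        simp
      have t1 : Tendsto (fun d => F (x - d) * G d) atTop (𝓝 0) := by
        refine squeeze_zero_norm (a := fun d => M * |G d|) (fun d => ?_) ?_
        · rw [Real.norm_eq_abs, abs_mul]
          exact mul_le_mul_of_nonneg_right (hM _) (abs_nonneg _)
        · have h2 : Tendsto (fun d => M * |G d|) atTop (𝓝 (M * |(0:ℝ)|)) :=
            (hG0.abs).const_mul M
          simpa using h2
      have t2 : Tendsto (fun d => ∫ y in (0:ℝ)..d, F (x - y) * g y) atTop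
          (𝓝 (∫ y in Set.Ioi 0, F (x - y) * g y)) :=
        intervalIntegral_tendsto_integral_Ioi 0 (hFg_int x).integrableOn tendsto_id
      exact Tendsto.congr' hev ((tendsto_const_nhds.sub t1).add t2)
    · have := integral_Iic_add_Ioi (b := (0:ℝ))
        (hFg_int x).integrableOn (hFg_int x).integrableOn
      show h x = _
      rw [hh]
      simp only []
      linarith
  -- part 3 : L¹ bound
  have hKabs : Integrable (fun p : ℝ × ℝ => |F (p.1 - p.2) * g p.2|) (volume.prod volume) :=
    hK.abs
  have hH : Integrable (fun x => ∫ y, |F (x - y) * g y|) volume := hKabs.integral_prod_left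
  have step1 : (∫ x, |h x|) ≤ ∫ x, ∫ y, |F (x - y) * g y| := by
    refine integral_mono hInt_h.abs hH fun x => ?_
    rw [hh]
    have := MeasureTheory.norm_integral_le_integral_norm (fun y => F (x - y) * g y) (μ := volume)
    simp only [Real.norm_eq_abs] at this
    exact this
  have swap3 := MeasureTheory.integral_integral_swap (f := fun x y => |F (x - y) * g y|) hKabs
  have step2 : (∫ x, ∫ y, |F (x - y) * g y|) = (∫ x, |F x|) * ∫ x, |g x| := by
    rw [swap3]
    calc (∫ y, ∫ x, |F (x - y) * g y|)
        = ∫ y, (∫ x, |F x|) * |g y| := by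
          refine MeasureTheory.integral_congr_ae (ae_of_all _ fun y => ?_)
          show (∫ x, |F (x - y) * g y|) = (∫ x, |F x|) * |g y|
          calc (∫ x, |F (x - y) * g y|) = ∫ x, |F (x - y)| * |g y| := by
                refine MeasureTheory.integral_congr_ae (ae_of_all _ fun x => ?_)
                exact abs_mul _ _
            _ = (∫ x, |F (x - y)|) * |g y| := MeasureTheory.integral_mul_const _ _
            _ = (∫ x, |F x|) * |g y| := by
                rw [integral_sub_right_eq_self (fun u => |F u|) y]
      _ = (∫ x, |F x|) * ∫ y, |g y| := MeasureTheory.integral_const_mul _ _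
  -- part 4 : Alexiewicz bound
  have hbddF : BddAbove (Set.range fun t : ℝ => |F t|) := ⟨M, by rintro _ ⟨t, rfl⟩; exact hM t⟩
  have part4 : (⨆ t : ℝ, |∫ x in Set.Iic t, h x|) ≤ (⨆ t : ℝ, |F t|) * ∫ x, |G x| := by
    refine ciSup_le fun t => ?_
    rw [key2 t]
    have hΦint : Integrable (fun y => F (t - y) * G y) volume :=
      hGint.bdd_mul ((hFcont.comp (continuous_const.sub continuous_id)).aestronglyMeasurable)
        (ae_of_all _ fun y => by rw [Real.norm_eq_abs]; exact hM _)
    have h1 : |∫ y, F (t - y) * G y| ≤ ∫ y, |F (t - y) * G y| := by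
      have := MeasureTheory.norm_integral_le_integral_norm (fun y => F (t - y) * G y) (μ := volume)
      simp only [Real.norm_eq_abs] at this
      exact this
    have h2 : (∫ y, |F (t - y) * G y|) ≤ ∫ y, (⨆ t : ℝ, |F t|) * |G y| := by
      refine integral_mono hΦint.abs (hGint.abs.const_mul _) fun y => ?_
      rw [abs_mul]
      exact mul_le_mul_of_nonneg_right (le_ciSup hbddF (t - y)) (abs_nonneg _)
    exact h1.trans (h2.trans_eq (MeasureTheory.integral_const_mul _ _))
  refine ⟨h, fun x => ⟨part1 x, rfl⟩, fun t => ?_, hInt_h, step1.trans (le_of_eq step2), part4⟩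
  refine ⟨fun y => F (t - y) * G y, fun y => ?_, ?_, ?_⟩
  · have e : ∀ c : ℝ, (∫ x in c..t, f (x - y) * G y) = (∫ u in (c - y)..(t - y), f u) * G y := by
      intro c
      rw [intervalIntegral.integral_mul_const, intervalIntegral.integral_comp_sub_right]
    have tcy : Tendsto (fun c : ℝ => c - y) atBot atBot := by
      simpa [sub_eq_add_neg] using tendsto_atBot_add_const_right atBot (-y) (tendsto_id (α := ℝ))
    exact Tendsto.congr (fun c => (e c).symm) (((hF (t - y)).comp tcy).mul_const (G y))
  · exact hGint.bdd_mul ((hFcont.comp (continuous_const.sub continuous_id)).aestronglyMeasurable)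
      (ae_of_all _ fun z => by rw [Real.norm_eq_abs]; exact hM _)
  · have hl := intervalIntegral_tendsto_integral_Iic t hInt_h.integrableOn tendsto_id
    rwa [key2 t] at hl
end

section
/- Let f : ℝ → ℝ be Lebesgue integrable on every compact interval such that the improper integral ∫_{-∞}^∞ f exists, and suppose there is a > 0 such that f is of bounded variation on (-∞,-a] and of bounded variation on [a,∞). Then for every y ∈ ℝ the Fourier transform f̂(y) = ∫_{-∞}^∞ f(x)e^{−2πixy} dx exists as an improper integral. -/
open MeasureTheory Filter Topology intervalIntegral

/-- The improper integral `∫_{-∞}^∞ h = z` (complex-valued). -/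
def HasImpIntC (h : ℝ → ℂ) (z : ℂ) : Prop :=
  ∃ z₁ z₂ : ℂ,
    Tendsto (fun c => ∫ x in c..(0:ℝ), h x) atBot (𝓝 z₁) ∧
    Tendsto (fun c => ∫ x in (0:ℝ)..c, h x) atTop (𝓝 z₂) ∧ z = z₁ + z₂

/-- The Fourier kernel `e^{-2πixy}`. -/
noncomputable def fourierKernel (x y : ℝ) : ℂ :=
  Complex.exp (-(2 * Real.pi * Complex.I * x * y))

lemma fourierKernel_eq (x y : ℝ) :
    fourierKernel x y = Complex.exp ((-(2 * Real.pi * Complex.I * y)) * x) := by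
  unfold fourierKernel; ring_nf

lemma norm_fourierKernel (x y : ℝ) : ‖fourierKernel x y‖ = 1 := by
  rw [fourierKernel_eq, Complex.norm_exp]
  have : ((-(2 * Real.pi * Complex.I * y)) * x).re = 0 := by simp
  rw [this, Real.exp_zero]

lemma continuous_fourierKernel (y : ℝ) : Continuous fun x => fourierKernel x y := by
  simp only [fourierKernel_eq]
  exact Complex.continuous_exp.comp (by continuity)

lemma fourierKernel_zero (x : ℝ) : fourierKernel x 0 = 1 := by
  simp [fourierKernel]

lemma twopiy_ne {y : ℝ} (hy : y ≠ 0) : (-(2 * Real.pi * Complex.I * y)) ≠ 0 := by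
  simp [Real.pi_ne_zero, Complex.I_ne_zero, Complex.ofReal_eq_zero, hy]

lemma integral_fourierKernel {y : ℝ} (hy : y ≠ 0) (s t : ℝ) :
    (∫ x in s..t, fourierKernel x y) =
      (fourierKernel t y - fourierKernel s y) / (-(2 * Real.pi * Complex.I * y)) := by
  simp only [fourierKernel_eq]
  rw [integral_exp_mul_complex (twopiy_ne hy)]

lemma norm_integral_fourierKernel_le {y : ℝ} (hy : y ≠ 0) (s t : ℝ) :
    ‖∫ x in s..t, fourierKernel x y‖ ≤ 1 / (Real.pi * |y|) := by
  rw [integral_fourierKernel hy, norm_div]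
  have hden : ‖(-(2 * Real.pi * Complex.I * y))‖ = 2 * Real.pi * |y| := by
    simp [norm_neg, map_mul, Complex.norm_real, Complex.norm_I,
      abs_of_pos Real.pi_pos]
  have hnum : ‖fourierKernel t y - fourierKernel s y‖ ≤ 2 := by
    calc ‖fourierKernel t y - fourierKernel s y‖
        ≤ ‖fourierKernel t y‖ + ‖fourierKernel s y‖ := norm_sub_le _ _
      _ = 2 := by rw [norm_fourierKernel, norm_fourierKernel]; norm_num
  rw [hden]
  have hpos : 0 < 2 * Real.pi * |y| := by positivity
  rw [div_le_div_iff₀ hpos (by positivity : (0:ℝ) < Real.pi * |y|)]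
  nlinarith [Real.pi_pos, abs_pos.2 hy, norm_nonneg (fourierKernel t y - fourierKernel s y),
    mul_pos Real.pi_pos (abs_pos.2 hy)]

lemma fe_integrable {f : ℝ → ℝ} (hfloc : ∀ c d : ℝ, IntervalIntegrable f volume c d)
    (y b c : ℝ) :
    IntervalIntegrable (fun x => (f x : ℂ) * fourierKernel x y) volume b c := by
  have h : IntervalIntegrable (fun x => (f x : ℂ)) volume b c :=
    ⟨(hfloc b c).1.ofReal, (hfloc b c).2.ofReal⟩
  exact h.mul_continuousOn (continuous_fourierKernel y).continuousOn

/-- Key Dirichlet-type estimate via Riemann sums and Abel summation. -/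
lemma key_estimate (f : ℝ → ℝ) (hfloc : ∀ c d : ℝ, IntervalIntegrable f volume c d)
    {y : ℝ} (hy : y ≠ 0) {b c : ℝ} (hbc : b ≤ c)
    (hfin : eVariationOn f (Set.Icc b c) ≠ ⊤) :
    ‖∫ x in b..c, (f x : ℂ) * fourierKernel x y‖ ≤
      (1 / (Real.pi * |y|)) * (|f b| + 2 * (eVariationOn f (Set.Icc b c)).toReal) := by
  set M := 1 / (Real.pi * |y|) with hM
  set V := (eVariationOn f (Set.Icc b c)).toReal with hVdef
  have hMnn : 0 ≤ M := by rw [hM]; positivity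
  have hVnn : 0 ≤ V := ENNReal.toReal_nonneg
  refine le_of_forall_pos_le_add fun ε hε => ?_
  obtain ⟨n₀, hn₀⟩ := exists_nat_gt (V * (c - b) / ε)
  set N := max n₀ 1 with hN
  have hN1 : 1 ≤ N := le_max_right _ _
  have hNpos : (0:ℝ) < N := by exact_mod_cast Nat.lt_of_lt_of_le Nat.zero_lt_one hN1
  have hNne : (N:ℝ) ≠ 0 := hNpos.ne'
  have hNε : V * (c - b) / N ≤ ε := by
    rw [div_le_iff₀ hNpos]
    have h1 : V * (c - b) < n₀ * ε := by
      rw [div_lt_iff₀ hε] at hn₀; linarith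
    have h2 : (n₀:ℝ) ≤ N := by exact_mod_cast le_max_left n₀ 1
    nlinarith
  set δ := (c - b) / N with hδdef
  have hδ : 0 ≤ δ := div_nonneg (by linarith) hNpos.le
  set x : ℕ → ℝ := fun i => b + i * δ with hxdef
  have hxmono : Monotone x := fun i j hij => by
    simp only [hxdef]
    exact add_le_add_right (mul_le_mul_of_nonneg_right (by exact_mod_cast hij) hδ) b
  have hx0 : x 0 = b := by simp [hxdef]
  have hxN : x N = c := by
    simp only [hxdef, hδdef]
    field_simp
    ring
  have hstep : ∀ i : ℕ, x (i + 1) - x i = δ := fun i => by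
    simp only [hxdef]; push_cast; ring
  have hmem : ∀ i ≤ N, x i ∈ Set.Icc b c := by
    intro i hi
    refine ⟨by simp only [hxdef]; nlinarith [Nat.cast_nonneg (α := ℝ) i], ?_⟩
    calc x i ≤ x N := hxmono hi
      _ = c := hxN
  set Φ : ℝ → ℂ := fun t => ∫ u in b..t, fourierKernel u y with hΦdef
  have hΦb : Φ b = 0 := intervalIntegral.integral_same
  have hΦnorm : ∀ t, ‖Φ t‖ ≤ M := fun t => norm_integral_fourierKernel_le hy b t
  have hker_int : ∀ s t : ℝ, IntervalIntegrable (fun u => fourierKernel u y) volume s t :=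
    fun s t => (continuous_fourierKernel y).intervalIntegrable s t
  have hΦsub : ∀ i : ℕ, Φ (x (i+1)) - Φ (x i) = ∫ u in x i..x (i+1), fourierKernel u y :=
    fun i => intervalIntegral.integral_interval_sub_left (hker_int b (x (i+1))) (hker_int b (x i))
  have hfe := fun s t => fe_integrable hfloc y s t
  -- piece decomposition
  have hpiece : ∀ i : ℕ, (∫ u in x i..x (i+1), (f u : ℂ) * fourierKernel u y) =
      f (x i) • (Φ (x (i+1)) - Φ (x i)) +
        ∫ u in x i..x (i+1), ((f u : ℂ) - (f (x i) : ℂ)) * fourierKernel u y := by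
    intro i
    have h1 : IntervalIntegrable (fun u => (f (x i) : ℂ) * fourierKernel u y) volume
        (x i) (x (i+1)) := (hker_int _ _).const_mul _
    have h2 := intervalIntegral.integral_sub (hfe (x i) (x (i+1))) h1
    simp only [sub_mul]
    rw [h2, intervalIntegral.integral_const_mul, hΦsub i, Complex.real_smul]
    ring
  -- error bound per piece
  have herr : ∀ i, i < N → ‖∫ u in x i..x (i+1), ((f u : ℂ) - (f (x i) : ℂ)) *
      fourierKernel u y‖ ≤ (eVariationOn f (Set.Icc (x i) (x (i+1)))).toReal * δ := by
    intro i hi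
    have hle : x i ≤ x (i+1) := hxmono (Nat.le_succ i)
    have hsub : Set.Icc (x i) (x (i+1)) ⊆ Set.Icc b c :=
      Set.Icc_subset_Icc (hmem i hi.le).1 (hmem (i+1) hi).2
    have hfin' : eVariationOn f (Set.Icc (x i) (x (i+1))) ≠ ⊤ :=
      ne_top_of_le_ne_top hfin (eVariationOn.mono f hsub)
    have hbound := intervalIntegral.norm_integral_le_of_norm_le_const
      (C := (eVariationOn f (Set.Icc (x i) (x (i+1)))).toReal)
      (f := fun u => ((f u : ℂ) - (f (x i) : ℂ)) * fourierKernel u y)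
      (a := x i) (b := x (i+1)) ?_
    · calc ‖∫ u in x i..x (i+1), ((f u : ℂ) - (f (x i) : ℂ)) * fourierKernel u y‖
          ≤ _ * |x (i+1) - x i| := hbound
        _ = _ * δ := by rw [hstep i, abs_of_nonneg hδ]
    · intro u hu
      rw [Set.uIoc_of_le hle] at hu
      have humem : u ∈ Set.Icc (x i) (x (i+1)) := ⟨hu.1.le, hu.2⟩
      have h1 : edist (f u) (f (x i)) ≤ eVariationOn f (Set.Icc (x i) (x (i+1))) :=
        eVariationOn.edist_le f humem ⟨le_rfl, hle⟩
      have h2 := ENNReal.toReal_mono hfin' h1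
      rw [edist_dist, ENNReal.toReal_ofReal dist_nonneg, Real.dist_eq] at h2
      calc ‖((f u : ℂ) - (f (x i) : ℂ)) * fourierKernel u y‖
          = |f u - f (x i)| := by
            rw [norm_mul, norm_fourierKernel, mul_one, ← Complex.ofReal_sub,
              Complex.norm_real, Real.norm_eq_abs]
        _ ≤ _ := h2
  -- variation additivity over the partition
  have hsum_evar : ∀ m : ℕ, m ≤ N →
      ∑ i ∈ Finset.range m, eVariationOn f (Set.Icc (x i) (x (i+1)))
        = eVariationOn f (Set.Icc b (x m)) := by
    intro m
    induction m with
    | zero =>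
      intro _
      rw [hx0, Set.Icc_self, Finset.sum_range_zero]
      exact (eVariationOn.subsingleton f Set.subsingleton_singleton).symm
    | succ m ih =>
      intro hm
      rw [Finset.sum_range_succ, ih (Nat.le_of_succ_le hm)]
      have h := eVariationOn.Icc_add_Icc f (s := Set.univ)
        (hmem m (Nat.le_of_succ_le hm)).1 (hxmono (Nat.le_succ m)) (Set.mem_univ (x m))
      simpa using h
  have hv_fin : ∀ i ∈ Finset.range N, eVariationOn f (Set.Icc (x i) (x (i+1))) ≠ ⊤ := by
    intro i hi
    rw [Finset.mem_range] at hi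
    exact ne_top_of_le_ne_top hfin (eVariationOn.mono f
      (Set.Icc_subset_Icc (hmem i hi.le).1 (hmem (i+1) hi).2))
  have hv_sum : ∑ i ∈ Finset.range N, (eVariationOn f (Set.Icc (x i) (x (i+1)))).toReal = V := by
    rw [← ENNReal.toReal_sum hv_fin, hsum_evar N le_rfl, hxN]
  -- sums of increments bounded by variation
  have habel_sum : ∑ i ∈ Finset.range (N-1), |f (x (i+1)) - f (x i)| ≤ V := by
    set u : ℕ → ℝ := fun i => x (min i (N-1)) with hu
    have humono : Monotone u := fun i j hij =>
      hxmono (min_le_min hij le_rfl)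
    have humem : ∀ i, u i ∈ Set.Icc b c := fun i =>
      hmem _ (le_trans (min_le_right _ _) (Nat.sub_le N 1))
    have hs := eVariationOn.sum_le (f := f) (n := N-1) humono humem
    have heq : ∑ i ∈ Finset.range (N-1), |f (x (i+1)) - f (x i)| =
        ∑ i ∈ Finset.range (N-1), (edist (f (u (i+1))) (f (u i))).toReal := by
      refine Finset.sum_congr rfl fun i hi => ?_
      rw [Finset.mem_range] at hi
      have e1 : u i = x i := by rw [hu]; simp [min_eq_left hi.le]
      have e2 : u (i+1) = x (i+1) := by rw [hu]; simp [min_eq_left (Nat.succ_le_of_lt hi)]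
      rw [e1, e2, edist_dist, ENNReal.toReal_ofReal dist_nonneg, Real.dist_eq]
    rw [heq, ← ENNReal.toReal_sum (fun i _ => edist_ne_top _ _)]
    exact ENNReal.toReal_mono hfin hs
  have hfx : |f (x (N-1))| ≤ |f b| + V := by
    have h1 : edist (f (x (N-1))) (f b) ≤ eVariationOn f (Set.Icc b c) :=
      eVariationOn.edist_le f (hmem _ (Nat.sub_le N 1)) ⟨le_rfl, hbc⟩
    have h2 := ENNReal.toReal_mono hfin h1
    rw [edist_dist, ENNReal.toReal_ofReal dist_nonneg, Real.dist_eq] at h2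
    have := abs_sub_abs_le_abs_sub (f (x (N-1))) (f b)
    linarith
  -- split the integral
  have hsplit : (∫ u in b..c, (f u : ℂ) * fourierKernel u y) =
      ∑ i ∈ Finset.range N, ∫ u in x i..x (i+1), (f u : ℂ) * fourierKernel u y := by
    have h := intervalIntegral.sum_integral_adjacent_intervals
      (a := x) (n := N) (fun k _ => hfe (x k) (x (k+1)))
    rw [hx0, hxN] at h
    exact h.symm
  -- Abel summation on the main sum
  set S : ℂ := ∑ i ∈ Finset.range N, f (x i) • (Φ (x (i+1)) - Φ (x i)) with hSdef
  have habel : S = f (x (N-1)) • Φ (x N) -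
      ∑ i ∈ Finset.range (N-1), (f (x (i+1)) - f (x i)) • Φ (x (i+1)) := by
    rw [hSdef, Finset.sum_range_by_parts]
    congr 1
    · congr 1
      rw [Finset.sum_range_sub (fun m => Φ (x m)), hx0, hΦb, sub_zero]
    · refine Finset.sum_congr rfl fun i _ => ?_
      congr 1
      rw [Finset.sum_range_sub (fun m => Φ (x m)), hx0, hΦb, sub_zero]
  have hSnorm : ‖S‖ ≤ M * (|f b| + 2 * V) := by
    rw [habel]
    calc ‖f (x (N-1)) • Φ (x N) -
          ∑ i ∈ Finset.range (N-1), (f (x (i+1)) - f (x i)) • Φ (x (i+1))‖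
        ≤ ‖f (x (N-1)) • Φ (x N)‖ +
          ‖∑ i ∈ Finset.range (N-1), (f (x (i+1)) - f (x i)) • Φ (x (i+1))‖ := norm_sub_le _ _
      _ ≤ |f (x (N-1))| * M + ∑ i ∈ Finset.range (N-1), |f (x (i+1)) - f (x i)| * M := by
          refine add_le_add ?_ ?_
          · rw [norm_smul, Real.norm_eq_abs]
            exact mul_le_mul_of_nonneg_left (hΦnorm _) (abs_nonneg _)
          · refine le_trans (norm_sum_le _ _) (Finset.sum_le_sum fun i _ => ?_)
            rw [norm_smul, Real.norm_eq_abs]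
            exact mul_le_mul_of_nonneg_left (hΦnorm _) (abs_nonneg _)
      _ ≤ (|f b| + V) * M + V * M := by
          refine add_le_add (mul_le_mul_of_nonneg_right hfx hMnn) ?_
          rw [← Finset.sum_mul]
          exact mul_le_mul_of_nonneg_right habel_sum hMnn
      _ = M * (|f b| + 2 * V) := by ring
  -- final assembly
  rw [hsplit]
  have hre : ∑ i ∈ Finset.range N, (∫ u in x i..x (i+1), (f u : ℂ) * fourierKernel u y) =
      S + ∑ i ∈ Finset.range N,
        ∫ u in x i..x (i+1), ((f u : ℂ) - (f (x i) : ℂ)) * fourierKernel u y := by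
    rw [hSdef, ← Finset.sum_add_distrib]
    exact Finset.sum_congr rfl fun i _ => hpiece i
  rw [hre]
  calc ‖S + ∑ i ∈ Finset.range N,
        ∫ u in x i..x (i+1), ((f u : ℂ) - (f (x i) : ℂ)) * fourierKernel u y‖
      ≤ ‖S‖ + ∑ i ∈ Finset.range N,
        ‖∫ u in x i..x (i+1), ((f u : ℂ) - (f (x i) : ℂ)) * fourierKernel u y‖ :=
        le_trans (norm_add_le _ _) (by gcongr; exact norm_sum_le _ _)
    _ ≤ M * (|f b| + 2 * V) + ∑ i ∈ Finset.range N,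
        (eVariationOn f (Set.Icc (x i) (x (i+1)))).toReal * δ :=
        add_le_add hSnorm (Finset.sum_le_sum fun i hi => herr i (Finset.mem_range.1 hi))
    _ = M * (|f b| + 2 * V) + V * δ := by rw [← Finset.sum_mul, hv_sum]
    _ ≤ M * (|f b| + 2 * V) + ε := by
        have h : V * δ = V * (c - b) / N := by rw [hδdef]; ring
        rw [h]
        linarith [hNε]

lemma evar_Ici_eq_iSup (f : ℝ → ℝ) (a : ℝ) :
    eVariationOn f (Set.Ici a) = ⨆ b, eVariationOn f (Set.Icc a b) := by
  apply le_antisymm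
  · refine iSup_le fun p => ?_
    obtain ⟨n, u, hu, hus⟩ := p
    set v : ℕ → ℝ := fun i => u (min i n) with hv
    have hvmono : Monotone v := fun i j hij => hu (min_le_min hij le_rfl)
    have hvm : ∀ i, v i ∈ Set.Icc a (u n) := fun i => ⟨hus _, hu (min_le_right _ _)⟩
    have hsum := eVariationOn.sum_le (f := f) (n := n) hvmono hvm
    have heq : ∑ i ∈ Finset.range n, edist (f (u (i+1))) (f (u i)) =
        ∑ i ∈ Finset.range n, edist (f (v (i+1))) (f (v i)) := by
      refine Finset.sum_congr rfl fun i hi => ?_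
      rw [Finset.mem_range] at hi
      simp [hv, min_eq_left hi.le, min_eq_left (Nat.succ_le_of_lt hi)]
    calc ∑ i ∈ Finset.range n, edist (f (u (i+1))) (f (u i))
        = ∑ i ∈ Finset.range n, edist (f (v (i+1))) (f (v i)) := heq
      _ ≤ eVariationOn f (Set.Icc a (u n)) := hsum
      _ ≤ ⨆ b, eVariationOn f (Set.Icc a b) :=
          le_iSup (fun b => eVariationOn f (Set.Icc a b)) (u n)
  · exact iSup_le fun b => eVariationOn.mono f Set.Icc_subset_Ici_self

lemma tail_small (f : ℝ → ℝ) (a : ℝ) (hBV : eVariationOn f (Set.Ici a) ≠ ⊤)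
    {ε : ℝ} (hε : 0 < ε) :
    ∃ b, a ≤ b ∧ (eVariationOn f (Set.Ici b)).toReal < ε := by
  rcases eq_or_ne (eVariationOn f (Set.Ici a)) 0 with h0 | h0
  · exact ⟨a, le_rfl, by rw [h0]; simpa using hε⟩
  · have hlt : eVariationOn f (Set.Ici a) - ENNReal.ofReal ε < eVariationOn f (Set.Ici a) :=
      ENNReal.sub_lt_self hBV h0 (ENNReal.ofReal_pos.2 hε).ne'
    have hlt2 : eVariationOn f (Set.Ici a) - ENNReal.ofReal ε <
        ⨆ b, eVariationOn f (Set.Icc a b) :=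
      lt_of_lt_of_le hlt (le_of_eq (evar_Ici_eq_iSup f a))
    obtain ⟨b, hb⟩ := lt_iSup_iff.1 hlt2
    refine ⟨max a b, le_max_left _ _, ?_⟩
    have hb' : eVariationOn f (Set.Ici a) - ENNReal.ofReal ε <
        eVariationOn f (Set.Icc a (max a b)) :=
      lt_of_lt_of_le hb (eVariationOn.mono f (Set.Icc_subset_Icc_right (le_max_right a b)))
    have hadd : eVariationOn f (Set.Icc a (max a b)) + eVariationOn f (Set.Ici (max a b))
        = eVariationOn f (Set.Ici a) := by
      have h := eVariationOn.union f (s := Set.Icc a (max a b)) (t := Set.Ici (max a b))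
        (x := max a b) (isGreatest_Icc (le_max_left a b)) isLeast_Ici
      rw [Set.Icc_union_Ici_eq_Ici (le_max_left a b)] at h
      exact h.symm
    have hIccne : eVariationOn f (Set.Icc a (max a b)) ≠ ⊤ :=
      ne_top_of_le_ne_top hBV (eVariationOn.mono f Set.Icc_subset_Ici_self)
    have htail : eVariationOn f (Set.Ici (max a b)) < ENNReal.ofReal ε := by
      by_contra hcon
      push_neg at hcon
      have h1 : eVariationOn f (Set.Icc a (max a b)) + ENNReal.ofReal ε ≤
          eVariationOn f (Set.Ici a) := by
        rw [← hadd]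
        exact add_le_add_right hcon _
      have h2 : eVariationOn f (Set.Icc a (max a b)) ≤
          eVariationOn f (Set.Ici a) - ENNReal.ofReal ε :=
        ENNReal.le_sub_of_add_le_right (by simp) h1
      exact absurd hb' (not_lt.2 h2)
    exact ENNReal.toReal_lt_of_lt_ofReal htail

lemma f_tendsto_atTop (f : ℝ → ℝ) (a : ℝ)
    (hfloc : ∀ c d : ℝ, IntervalIntegrable f volume c d)
    {L₂ : ℝ} (hL₂ : Tendsto (fun c => ∫ x in (0:ℝ)..c, f x) atTop (𝓝 L₂))
    (hBV : eVariationOn f (Set.Ici a) ≠ ⊤) :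
    Tendsto f atTop (𝓝 0) := by
  have hcauchy : Cauchy (Filter.map f atTop) := by
    rw [Metric.cauchy_iff]
    refine ⟨Filter.map_neBot, fun ε hε => ?_⟩
    obtain ⟨b, hab, hb⟩ := tail_small f a hBV hε
    refine ⟨f '' Set.Ici b, Filter.image_mem_map (Ici_mem_atTop b), ?_⟩
    rintro _ ⟨x, hx, rfl⟩ _ ⟨y, hy, rfl⟩
    have hfinb : eVariationOn f (Set.Ici b) ≠ ⊤ :=
      ne_top_of_le_ne_top hBV (eVariationOn.mono f (Set.Ici_subset_Ici.2 hab))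
    have hd : edist (f x) (f y) ≤ eVariationOn f (Set.Ici b) := eVariationOn.edist_le f hx hy
    have h2 := ENNReal.toReal_mono hfinb hd
    rw [edist_dist, ENNReal.toReal_ofReal dist_nonneg] at h2
    exact lt_of_le_of_lt h2 hb
  obtain ⟨l, hl⟩ := cauchy_map_iff_exists_tendsto.1 hcauchy
  rcases lt_trichotomy l 0 with hneg | hzero | hpos
  · exfalso
    have hev : ∀ᶠ x in atTop, f x ≤ l/2 := hl.eventually (eventually_le_nhds (by linarith))
    obtain ⟨T, hT⟩ := eventually_atTop.1 hev
    set T' := max T 0 with hT'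
    have hup : Tendsto (fun c => (∫ x in (0:ℝ)..T', f x) + (c + -T') * (l/2)) atTop atBot := by
      apply tendsto_atBot_add_const_left
      exact (tendsto_atTop_add_const_right _ (-T') tendsto_id).atTop_mul_const_of_neg
        (by linarith)
    refine not_tendsto_nhds_of_tendsto_atBot (tendsto_atBot_mono' atTop ?_ hup) L₂ hL₂
    filter_upwards [Ici_mem_atTop T'] with c hc
    have hc' : T' ≤ c := hc
    have hsplit : (∫ x in (0:ℝ)..c, f x) =
        (∫ x in (0:ℝ)..T', f x) + ∫ x in T'..c, f x :=
      (intervalIntegral.integral_add_adjacent_intervals (hfloc 0 T') (hfloc T' c)).symm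
    have hmono : (∫ x in T'..c, f x) ≤ ∫ x in T'..c, (l/2 : ℝ) := by
      apply intervalIntegral.integral_mono_on hc' (hfloc T' c) intervalIntegrable_const
      intro x hx
      exact hT x (le_trans (le_max_left T 0) hx.1)
    rw [hsplit]
    have : (∫ x in T'..c, (l/2 : ℝ)) = (c + -T') * (l/2) := by
      rw [intervalIntegral.integral_const, smul_eq_mul]; ring
    linarith [hmono, this ▸ hmono]
  · rwa [hzero] at hl
  · exfalso
    have hev : ∀ᶠ x in atTop, l/2 ≤ f x := hl.eventually (eventually_ge_nhds (by linarith))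
    obtain ⟨T, hT⟩ := eventually_atTop.1 hev
    set T' := max T 0 with hT'
    have hup : Tendsto (fun c => (∫ x in (0:ℝ)..T', f x) + (c + -T') * (l/2)) atTop atTop := by
      apply tendsto_atTop_add_const_left
      exact (tendsto_atTop_add_const_right _ (-T') tendsto_id).atTop_mul_const (by linarith)
    refine not_tendsto_nhds_of_tendsto_atTop (tendsto_atTop_mono' atTop ?_ hup) L₂ hL₂
    filter_upwards [Ici_mem_atTop T'] with c hc
    have hc' : T' ≤ c := hc
    have hsplit : (∫ x in (0:ℝ)..c, f x) =
        (∫ x in (0:ℝ)..T', f x) + ∫ x in T'..c, f x :=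
      (intervalIntegral.integral_add_adjacent_intervals (hfloc 0 T') (hfloc T' c)).symm
    have hmono : (∫ x in T'..c, (l/2 : ℝ)) ≤ ∫ x in T'..c, f x := by
      apply intervalIntegral.integral_mono_on hc' intervalIntegrable_const (hfloc T' c)
      intro x hx
      exact hT x (le_trans (le_max_left T 0) hx.1)
    rw [hsplit]
    have : (∫ x in T'..c, (l/2 : ℝ)) = (c + -T') * (l/2) := by
      rw [intervalIntegral.integral_const, smul_eq_mul]; ring
    linarith [this ▸ hmono]

lemma top_side (f : ℝ → ℝ) (a : ℝ)
    (hfloc : ∀ c d : ℝ, IntervalIntegrable f volume c d)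
    {L₂ : ℝ} (hL₂ : Tendsto (fun c => ∫ x in (0:ℝ)..c, f x) atTop (𝓝 L₂))
    (hBV : eVariationOn f (Set.Ici a) ≠ ⊤) (y : ℝ) :
    ∃ z : ℂ, Tendsto (fun c => ∫ x in (0:ℝ)..c, (f x : ℂ) * fourierKernel x y)
      atTop (𝓝 z) := by
  rcases eq_or_ne y 0 with rfl | hy
  · refine ⟨(L₂ : ℂ), ?_⟩
    have heq : (fun c => ∫ x in (0:ℝ)..c, (f x : ℂ) * fourierKernel x 0) =
        fun c => ((∫ x in (0:ℝ)..c, f x : ℝ) : ℂ) := by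
      funext c
      simp only [fourierKernel_zero, mul_one]
      exact intervalIntegral.integral_ofReal
    rw [heq]
    exact (Complex.continuous_ofReal.tendsto _).comp hL₂
  · set G := fun c => ∫ x in (0:ℝ)..c, (f x : ℂ) * fourierKernel x y with hG
    have hf0 := f_tendsto_atTop f a hfloc hL₂ hBV
    apply cauchy_map_iff_exists_tendsto.1
    rw [Metric.cauchy_iff]
    refine ⟨Filter.map_neBot, fun ε hε => ?_⟩
    set M := 1 / (Real.pi * |y|) with hM
    have hMpos : 0 < M := by
      rw [hM]
      have := abs_pos.2 hy
      positivity
    set η := ε / (3 * (M + 1)) with hη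
    have hηpos : 0 < η := by positivity
    obtain ⟨b₀, hab₀, hb₀⟩ := tail_small f a hBV hηpos
    have hsmall : ∀ᶠ x in atTop, |f x| < η := by
      have := Metric.tendsto_nhds.1 hf0 η hηpos
      filter_upwards [this] with x hx
      rwa [Real.dist_eq, sub_zero] at hx
    obtain ⟨b₁, hb₁⟩ := eventually_atTop.1 hsmall
    set B := max b₀ b₁ with hB
    refine ⟨G '' Set.Ici B, Filter.image_mem_map (Ici_mem_atTop B), ?_⟩
    have htailne : eVariationOn f (Set.Ici b₀) ≠ ⊤ :=
      ne_top_of_le_ne_top hBV (eVariationOn.mono f (Set.Ici_subset_Ici.2 hab₀))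
    have key : ∀ p q : ℝ, B ≤ p → p ≤ q → dist (G p) (G q) < ε := by
      intro p q hp hpq
      have hpb₀ : b₀ ≤ p := le_trans (le_max_left _ _) hp
      have hpb₁ : b₁ ≤ p := le_trans (le_max_right _ _) hp
      have hsub : Set.Icc p q ⊆ Set.Ici b₀ := fun z hz => le_trans hpb₀ hz.1
      have hfin : eVariationOn f (Set.Icc p q) ≠ ⊤ :=
        ne_top_of_le_ne_top htailne (eVariationOn.mono f hsub)
      have hdiff : G q - G p = ∫ x in p..q, (f x : ℂ) * fourierKernel x y :=
        intervalIntegral.integral_interval_sub_left (fe_integrable hfloc y 0 q)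
          (fe_integrable hfloc y 0 p)
      rw [dist_eq_norm, norm_sub_rev, hdiff]
      have h1 := key_estimate f hfloc hy hpq hfin
      have h2 : |f p| < η := hb₁ p hpb₁
      have h3 : (eVariationOn f (Set.Icc p q)).toReal < η :=
        lt_of_le_of_lt (ENNReal.toReal_mono htailne (eVariationOn.mono f hsub)) hb₀
      have h4 : M * (|f p| + 2 * (eVariationOn f (Set.Icc p q)).toReal) < M * (3 * η) := by
        apply mul_lt_mul_of_pos_left _ hMpos
        linarith
      have h5 : M * (3 * η) < ε := by
        rw [hη]
        rw [div_eq_iff (by positivity : (3:ℝ) * (M + 1) ≠ 0)] at *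
        nlinarith
      calc ‖∫ x in p..q, (f x : ℂ) * fourierKernel x y‖
          ≤ M * (|f p| + 2 * (eVariationOn f (Set.Icc p q)).toReal) := h1
        _ < ε := lt_trans h4 h5
    rintro _ ⟨c₁, hc₁, rfl⟩ _ ⟨c₂, hc₂, rfl⟩
    rcases le_total c₁ c₂ with h | h
    · exact key c₁ c₂ hc₁ h
    · rw [dist_comm]
      exact key c₂ c₁ hc₂ h

/-- **Existence of the Fourier transform.** If `f` is Lebesgue integrable on every compact
interval, its improper integral over `ℝ` exists, and `f` is of bounded variation on
`(-∞,-a]` and on `[a,∞)` for some `a > 0`, then `f̂(y) = ∫_{-∞}^∞ f(x)e^{−2πixy} dx`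
exists as an improper integral for every `y ∈ ℝ`. -/
theorem fourier_transform_exists (f : ℝ → ℝ) (a : ℝ) (ha : 0 < a)
    (hfloc : ∀ c d : ℝ, IntervalIntegrable f volume c d)
    (hfimp : ∃ L : ℝ, HasImpInt f L)
    (hBV₁ : BoundedVariationOn f (Set.Iic (-a)))
    (hBV₂ : BoundedVariationOn f (Set.Ici a)) :
    ∀ y : ℝ, ∃ z : ℂ, HasImpIntC (fun x => (f x : ℂ) * fourierKernel x y) z := by
  intro y
  obtain ⟨L, L₁, L₂, hL₁, hL₂, -⟩ := hfimp
  obtain ⟨z₂, hz₂⟩ := top_side f a hfloc hL₂ hBV₂ y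
  -- reflected function
  set g : ℝ → ℝ := fun x => f (-x) with hg
  have hgloc : ∀ c d : ℝ, IntervalIntegrable g volume c d := by
    intro c d
    simpa using (IntervalIntegrable.iff_comp_neg (a := -c) (b := -d) (f := f) (by simp)).1 (hfloc (-c) (-d))
  have hgint : ∀ c : ℝ, (∫ x in (0:ℝ)..c, g x) = ∫ x in (-c)..(0:ℝ), f x := by
    intro c
    rw [hg]
    rw [intervalIntegral.integral_comp_neg (a := (0:ℝ)) (b := c) (f := f)]
    norm_num
  have hgL : Tendsto (fun c => ∫ x in (0:ℝ)..c, g x) atTop (𝓝 L₁) := by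
    have h1 : Tendsto (fun c : ℝ => ∫ x in (-c)..(0:ℝ), f x) atTop (𝓝 L₁) :=
      hL₁.comp tendsto_neg_atTop_atBot
    have h2 : (fun c => ∫ x in (0:ℝ)..c, g x) = fun c : ℝ => ∫ x in (-c)..(0:ℝ), f x := by
      funext c; exact hgint c
    rw [h2]; exact h1
  have hgBV : eVariationOn g (Set.Ici a) ≠ ⊤ := by
    have hanti : AntitoneOn (Neg.neg : ℝ → ℝ) (Set.Ici a) := fun u _ v _ huv => neg_le_neg huv
    have hcomp := eVariationOn.comp_eq_of_antitoneOn f (Neg.neg : ℝ → ℝ) hanti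
    have himg : (Neg.neg : ℝ → ℝ) '' Set.Ici a = Set.Iic (-a) := by
      ext x
      simp only [Set.mem_image, Set.mem_Ici, Set.mem_Iic]
      constructor
      · rintro ⟨u, hu, rfl⟩; linarith
      · intro hx; exact ⟨-x, by linarith, by ring⟩
    rw [himg] at hcomp
    have : g = f ∘ (Neg.neg : ℝ → ℝ) := rfl
    rw [this, hcomp]
    exact hBV₁
  obtain ⟨z₁, hz₁⟩ := top_side g a hgloc hgL hgBV (-y)
  -- rewrite the reflected Fourier integral
  have hker : ∀ x : ℝ, fourierKernel x (-y) = fourierKernel (-x) y := by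
    intro x
    unfold fourierKernel
    push_cast
    ring_nf
  have hint_eq : ∀ c : ℝ, (∫ x in (0:ℝ)..c, (g x : ℂ) * fourierKernel x (-y)) =
      ∫ x in (-c)..(0:ℝ), (f x : ℂ) * fourierKernel x y := by
    intro c
    have h1 : (fun x => (g x : ℂ) * fourierKernel x (-y)) =
        fun x => ((f (-x) : ℂ) * fourierKernel (-x) y) := by
      funext x; rw [hg, hker]
    rw [h1, intervalIntegral.integral_comp_neg (a := (0:ℝ)) (b := c)
      (f := fun u => (f u : ℂ) * fourierKernel u y)]
    norm_num
  have hz₁' : Tendsto (fun c => ∫ x in c..(0:ℝ), (f x : ℂ) * fourierKernel x y)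
      atBot (𝓝 z₁) := by
    have h1 : Tendsto (fun c : ℝ => ∫ x in (-c)..(0:ℝ), (f x : ℂ) * fourierKernel x y)
        atTop (𝓝 z₁) := by
      have h2 : (fun c => ∫ x in (0:ℝ)..c, (g x : ℂ) * fourierKernel x (-y)) =
          fun c : ℝ => ∫ x in (-c)..(0:ℝ), (f x : ℂ) * fourierKernel x y := by
        funext c; exact hint_eq c
      rw [h2] at hz₁
      exact hz₁
    have h3 := h1.comp tendsto_neg_atBot_atTop
    have h4 : ((fun c : ℝ => ∫ x in (-c)..(0:ℝ), (f x : ℂ) * fourierKernel x y) ∘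
        fun c : ℝ => -c) = fun c => ∫ x in c..(0:ℝ), (f x : ℂ) * fourierKernel x y := by
      funext c; simp [Function.comp]
    rwa [h4] at h3
  exact ⟨z₁ + z₂, z₁, z₂, hz₁', hz₂, rfl⟩
end

section
/- (Riemann–Lebesgue lemma) Let f : ℝ → ℝ be Lebesgue integrable on every compact interval, of bounded variation on all of ℝ, and such that the improper integral ∫_{-∞}^∞ f exists. Then the Fourier transform f̂(y) = ∫_{-∞}^∞ f(x)e^{−2πixy} dx exists as an improper integral for every y ∈ ℝ, and f̂(t) → 0 as |t| → ∞. -/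
open MeasureTheory Filter Topology intervalIntegral

namespace RL

open Set

noncomputable def cy (y : ℝ) : ℂ := -(2 * Real.pi * Complex.I * y)

lemma cy_ne {y : ℝ} (hy : y ≠ 0) : cy y ≠ 0 := by
  simp [cy, Complex.ext_iff, Real.pi_ne_zero, hy]

lemma norm_cy (y : ℝ) : ‖cy y‖ = 2 * Real.pi * |y| := by
  simp [cy, norm_mul, Complex.norm_real, Real.norm_eq_abs, abs_of_pos Real.pi_pos,
    Complex.norm_I]

lemma kernel_eq (x y : ℝ) : fourierKernel x y = Complex.exp (cy y * x) := by
  unfold fourierKernel cy; ring_nf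

lemma re_cy_mul (y r : ℝ) : (cy y * r).re = 0 := by
  simp [cy, Complex.mul_re, Complex.mul_im]

lemma norm_exp_cy (y r : ℝ) : ‖Complex.exp (cy y * r)‖ = 1 := by
  rw [Complex.norm_exp, re_cy_mul, Real.exp_zero]

lemma norm_kernel (x y : ℝ) : ‖fourierKernel x y‖ = 1 := by
  rw [kernel_eq]; exact norm_exp_cy y x

lemma continuous_kernel (y : ℝ) : Continuous fun x => fourierKernel x y := by
  simp_rw [kernel_eq]; fun_prop

lemma intInt_exp (y : ℝ) (hy : y ≠ 0) (u v : ℝ) :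
    ∫ x in u..v, fourierKernel x y
      = (Complex.exp (cy y * v) - Complex.exp (cy y * u)) / cy y := by
  simp_rw [kernel_eq]
  exact integral_exp_mul_complex (cy_ne hy)

/-- integrable of bounded measurable, finite measure -/
lemma int_of_bounded {α : Type*} [MeasurableSpace α] {μ : Measure α} [IsFiniteMeasure μ]
    {h : α → ℂ} (hm : AEStronglyMeasurable h μ) {C : ℝ} (hb : ∀ x, ‖h x‖ ≤ C) :
    Integrable h μ :=
  ⟨hm, HasFiniteIntegral.of_bounded (ae_of_all _ hb)⟩

lemma finite_restrict (s : Set ℝ) (a b : ℝ) (hs : s ⊆ Ioc a b) :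
    IsFiniteMeasure (volume.restrict s) := by
  constructor
  rw [Measure.restrict_apply_univ]
  exact lt_of_le_of_lt (measure_mono hs) measure_Ioc_lt_top

/-- **Key Fubini computation.** -/
lemma key (μ : Measure ℝ) [IsFiniteMeasure μ] {y : ℝ} (hy : y ≠ 0) {b c : ℝ} (hbc : b ≤ c) :
    ∫ x in b..c, ((μ (Iic x)).toReal : ℂ) * fourierKernel x y
      = (Complex.exp (cy y * c) * ((μ univ).toReal : ℂ)
          - ∫ t, Complex.exp (cy y * (max b (min t c))) ∂μ) / cy y := by
  haveI : IsFiniteMeasure (volume.restrict (Ioc b c)) :=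
    finite_restrict _ b c (subset_rfl)
  have hswap :
      ∫ x in Ioc b c, ((μ (Iic x)).toReal : ℂ) * fourierKernel x y
        = ∫ t, (∫ x in Ioc b c, (if t ≤ x then fourierKernel x y else 0)) ∂μ := by
    have h1 : ∀ x : ℝ, ((μ (Iic x)).toReal : ℂ) * fourierKernel x y
        = ∫ t, (if t ≤ x then fourierKernel x y else 0) ∂μ := by
      intro x
      have : (fun t => if t ≤ x then fourierKernel x y else 0)
          = (Iic x).indicator (fun _ => fourierKernel x y) := by
        ext t; simp [Set.indicator_apply, mem_Iic]
      rw [this, integral_indicator_const _ measurableSet_Iic, Complex.real_smul]; rfl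
    have hint : Integrable (Function.uncurry fun x t => if t ≤ x then fourierKernel x y else 0)
        ((volume.restrict (Ioc b c)).prod μ) := by
      apply int_of_bounded (C := 1)
      · apply (StronglyMeasurable.aestronglyMeasurable ?_)
        apply StronglyMeasurable.ite (measurableSet_le measurable_snd measurable_fst)
        · exact ((continuous_kernel y).stronglyMeasurable).comp_measurable measurable_fst
        · exact stronglyMeasurable_const
      · rintro ⟨x, t⟩
        dsimp only [Function.uncurry]
        split
        · rw [norm_kernel]
        · simp
    simp_rw [h1]
    exact MeasureTheory.integral_integral_swap hint
  have hinner : ∀ t : ℝ, (∫ x in Ioc b c, (if t ≤ x then fourierKernel x y else 0))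
      = (Complex.exp (cy y * c) - Complex.exp (cy y * (max b (min t c)))) / cy y := by
    intro t
    rcases le_or_gt t b with h | h
    · have : ∀ x ∈ Ioc b c, (if t ≤ x then fourierKernel x y else 0) = fourierKernel x y :=
        fun x hx => if_pos (h.trans hx.1.le)
      rw [setIntegral_congr_fun measurableSet_Ioc this, ← integral_of_le hbc, intInt_exp y hy]
      congr 3
      rw [min_eq_left (h.trans hbc), max_eq_left h]
    · rcases le_or_gt t c with h2 | h2
      · have heq : ∀ x : ℝ, (if t ≤ x then fourierKernel x y else 0)
            = (Ici t).indicator (fun x => fourierKernel x y) x := by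
          intro x; simp [Set.indicator_apply, Ici]
        simp_rw [heq]
        rw [MeasureTheory.integral_indicator measurableSet_Ici,
          Measure.restrict_restrict measurableSet_Ici]
        have hset : Ici t ∩ Ioc b c = Icc t c := by
          ext x
          constructor
          · rintro ⟨hx1, _, hx3⟩; exact ⟨hx1, hx3⟩
          · rintro ⟨hx1, hx2⟩; exact ⟨hx1, h.trans_le hx1, hx2⟩
        rw [hset, integral_Icc_eq_integral_Ioc, ← integral_of_le h2, intInt_exp y hy]
        congr 3
        rw [min_eq_left h2, max_eq_right h.le]
      · have : ∀ x ∈ Ioc b c, (if t ≤ x then fourierKernel x y else 0) = 0 :=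
          fun x hx => if_neg (by linarith [hx.2])
        rw [setIntegral_congr_fun measurableSet_Ioc this, MeasureTheory.integral_zero]
        rw [min_eq_right h2.le, max_eq_right hbc]
        simp
  rw [integral_of_le hbc, hswap]
  simp_rw [hinner, sub_div]
  rw [MeasureTheory.integral_sub]
  · congr 1
    · rw [MeasureTheory.integral_const, Complex.real_smul, measureReal_def]
      ring
    · rw [← MeasureTheory.integral_div]
  · exact (integrable_const _).div_const _
  · apply Integrable.div_const
    apply int_of_bounded (C := 1)
    · apply Continuous.aestronglyMeasurable; fun_prop
    · intro t; rw [norm_exp_cy]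

lemma monotone_iic_toReal (μ : Measure ℝ) [IsFiniteMeasure μ] :
    Monotone fun x => (μ (Iic x)).toReal := fun _ _ hxy =>
  ENNReal.toReal_mono (measure_ne_top μ _) (measure_mono (Iic_subset_Iic.2 hxy))

lemma II_iic_kernel (μ : Measure ℝ) [IsFiniteMeasure μ] (y a b : ℝ) :
    IntervalIntegrable (fun x => ((μ (Iic x)).toReal : ℂ) * fourierKernel x y) volume a b := by
  rw [intervalIntegrable_iff]
  haveI : IsFiniteMeasure (volume.restrict (uIoc a b)) :=
    finite_restrict _ (min a b) (max a b) (by rw [uIoc])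
  apply int_of_bounded (C := (μ univ).toReal)
  · apply AEStronglyMeasurable.restrict
    apply Measurable.aestronglyMeasurable
    exact (Complex.measurable_ofReal.comp (monotone_iic_toReal μ).measurable).mul
      (continuous_kernel y).measurable
  · intro x
    rw [norm_mul, norm_kernel, mul_one, Complex.norm_real, Real.norm_eq_abs,
      abs_of_nonneg ENNReal.toReal_nonneg]
    exact ENNReal.toReal_mono (measure_ne_top μ _) (measure_mono (subset_univ _))

/-- the interval integral of `f·K` in terms of the two Stieltjes measures -/
lemma phi_eq (μ ν : Measure ℝ) [IsFiniteMeasure μ] [IsFiniteMeasure ν]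
    (hMeq : ((μ univ).toReal : ℝ) = (ν univ).toReal) {y : ℝ} (hy : y ≠ 0)
    {g : ℝ → ℝ} (hg : ∀ᵐ x : ℝ ∂volume, g x = (μ (Iic x)).toReal - (ν (Iic x)).toReal)
    {b c : ℝ} (hbc : b ≤ c) :
    ∫ x in b..c, (g x : ℂ) * fourierKernel x y
      = ((∫ t, Complex.exp (cy y * (max b (min t c))) ∂ν)
          - ∫ t, Complex.exp (cy y * (max b (min t c))) ∂μ) / cy y := by
  have h1 : ∫ x in b..c, (g x : ℂ) * fourierKernel x y
      = ∫ x in b..c, (((μ (Iic x)).toReal : ℂ) * fourierKernel x y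
          - ((ν (Iic x)).toReal : ℂ) * fourierKernel x y) := by
    apply intervalIntegral.integral_congr_ae
    filter_upwards [hg] with x hx _
    rw [hx]; push_cast; ring
  rw [h1, intervalIntegral.integral_sub (II_iic_kernel μ y b c) (II_iic_kernel ν y b c),
    key μ hy hbc, key ν hy hbc, hMeq, div_sub_div_same]
  ring

lemma tendsto_A (μ : Measure ℝ) [IsFiniteMeasure μ] (y : ℝ) :
    Tendsto (fun c => ∫ t, Complex.exp (cy y * (max 0 (min t c))) ∂μ) atTop
      (𝓝 (∫ t, Complex.exp (cy y * (max 0 t)) ∂μ)) := by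
  apply MeasureTheory.tendsto_integral_filter_of_dominated_convergence (bound := fun _ => (1 : ℝ))
  · filter_upwards with c
    apply Continuous.aestronglyMeasurable; fun_prop
  · filter_upwards with c
    exact ae_of_all _ fun t => (norm_exp_cy _ _).le
  · exact integrable_const 1
  · apply ae_of_all
    intro t
    apply Tendsto.congr' _ (tendsto_const_nhds (x := Complex.exp (cy y * (max 0 t))))
    filter_upwards [eventually_ge_atTop t] with c hc
    rw [min_eq_left hc]

lemma tendsto_B (μ : Measure ℝ) [IsFiniteMeasure μ] (y : ℝ) :
    Tendsto (fun c => ∫ t, Complex.exp (cy y * (max c (min t 0))) ∂μ) atBot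
      (𝓝 (∫ t, Complex.exp (cy y * (min t 0)) ∂μ)) := by
  apply MeasureTheory.tendsto_integral_filter_of_dominated_convergence (bound := fun _ => (1 : ℝ))
  · filter_upwards with c
    apply Continuous.aestronglyMeasurable; fun_prop
  · filter_upwards with c
    exact ae_of_all _ fun t => (norm_exp_cy _ _).le
  · exact integrable_const 1
  · apply ae_of_all
    intro t
    apply Tendsto.congr' _ (tendsto_const_nhds (x := Complex.exp (cy y * (min t 0))))
    filter_upwards [eventually_le_atBot (min t 0)] with c hc
    rw [max_eq_right hc]

lemma norm_int_exp (μ : Measure ℝ) [IsFiniteMeasure μ] (g : ℝ → ℝ) (y : ℝ) :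
    ‖∫ t, Complex.exp (cy y * g t) ∂μ‖ ≤ (μ univ).toReal := by
  simpa [Measure.real] using norm_integral_le_of_norm_le_const (μ := μ) (C := 1)
    (ae_of_all _ fun t => (norm_exp_cy y (g t)).le)

/-- if `f` tends to `F` at `+∞` and `∫_0^c f` converges, then `F = 0`. -/
lemma limit_eq_zero_atTop {f : ℝ → ℝ} (hfloc : ∀ c d : ℝ, IntervalIntegrable f volume c d)
    {L F : ℝ} (hT : Tendsto (fun c => ∫ x in (0:ℝ)..c, f x) atTop (𝓝 L))
    (hF : Tendsto f atTop (𝓝 F)) : F = 0 := by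
  have h1 : Tendsto (fun c => ∫ x in c..(c+1), f x) atTop (𝓝 0) := by
    have heq : ∀ c : ℝ, ∫ x in c..(c+1), f x
        = (∫ x in (0:ℝ)..(c+1), f x) - ∫ x in (0:ℝ)..c, f x :=
      fun c => (integral_interval_sub_left (hfloc 0 (c+1)) (hfloc 0 c)).symm
    simp_rw [heq]
    simpa using (hT.comp (tendsto_atTop_add_const_right _ 1 tendsto_id)).sub hT
  have h2 : Tendsto (fun c => ∫ x in c..(c+1), f x) atTop (𝓝 F) := by
    rw [Metric.tendsto_nhds] at hF ⊢
    intro ε hε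
    obtain ⟨N, hN⟩ := eventually_atTop.1 (hF (ε/2) (by linarith))
    filter_upwards [eventually_ge_atTop N] with c hc
    have key : ∫ x in c..(c+1), f x - F = (∫ x in c..(c+1), f x) - F := by
      rw [intervalIntegral.integral_sub (hfloc c (c+1)) (intervalIntegrable_const)]
      simp
    have hb : ‖∫ x in c..(c+1), (f x - F)‖ ≤ (ε/2) * |c + 1 - c| := by
      apply intervalIntegral.norm_integral_le_of_norm_le_const
      intro x hx
      rw [Set.uIoc_of_le (by linarith : c ≤ c + 1)] at hx
      have : dist (f x) F < ε/2 := hN x (le_of_lt (lt_of_le_of_lt hc hx.1))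
      rw [Real.dist_eq] at this
      rw [Real.norm_eq_abs]
      exact this.le
    rw [key] at hb
    have : |c + 1 - c| = 1 := by norm_num
    rw [this, mul_one] at hb
    rw [Real.dist_eq]
    calc |(∫ x in c..(c+1), f x) - F| ≤ ε/2 := by rwa [Real.norm_eq_abs] at hb
      _ < ε := by linarith
  exact (tendsto_nhds_unique h2 h1)

/-- if `f` tends to `F` at `-∞` and `∫_c^0 f` converges, then `F = 0`. -/
lemma limit_eq_zero_atBot {f : ℝ → ℝ} (hfloc : ∀ c d : ℝ, IntervalIntegrable f volume c d)
    {L F : ℝ} (hT : Tendsto (fun c => ∫ x in c..(0:ℝ), f x) atBot (𝓝 L))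
    (hF : Tendsto f atBot (𝓝 F)) : F = 0 := by
  have h1 : Tendsto (fun c => ∫ x in (c-1)..c, f x) atBot (𝓝 0) := by
    have heq : ∀ c : ℝ, ∫ x in (c-1)..c, f x
        = (∫ x in (c-1)..(0:ℝ), f x) - ∫ x in c..(0:ℝ), f x := by
      intro c
      rw [← intervalIntegral.integral_add_adjacent_intervals (hfloc (c-1) c) (hfloc c 0)]
      ring
    simp_rw [heq]
    simpa [sub_eq_add_neg] using (hT.comp (tendsto_atBot_add_const_right _ (-1) tendsto_id)).sub hT
  have h2 : Tendsto (fun c => ∫ x in (c-1)..c, f x) atBot (𝓝 F) := by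
    rw [Metric.tendsto_nhds] at hF ⊢
    intro ε hε
    obtain ⟨N, hN⟩ := eventually_atBot.1 (hF (ε/2) (by linarith))
    filter_upwards [eventually_le_atBot N] with c hc
    have key : ∫ x in (c-1)..c, f x - F = (∫ x in (c-1)..c, f x) - F := by
      rw [intervalIntegral.integral_sub (hfloc (c-1) c) (intervalIntegrable_const)]
      simp
    have hb : ‖∫ x in (c-1)..c, (f x - F)‖ ≤ (ε/2) * |c - (c - 1)| := by
      apply intervalIntegral.norm_integral_le_of_norm_le_const
      intro x hx
      rw [Set.uIoc_of_le (by linarith : c - 1 ≤ c)] at hx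
      have : dist (f x) F < ε/2 := hN x (le_trans hx.2 hc)
      rw [Real.dist_eq] at this
      rw [Real.norm_eq_abs]
      exact this.le
    rw [key] at hb
    have : |c - (c - 1)| = 1 := by norm_num
    rw [this, mul_one] at hb
    rw [Real.dist_eq]
    calc |(∫ x in (c-1)..c, f x) - F| ≤ ε/2 := by rwa [Real.norm_eq_abs] at hb
      _ < ε := by linarith
  exact (tendsto_nhds_unique h2 h1)

end RL

/-- **Riemann–Lebesgue lemma.** If `f` is Lebesgue integrable on every compact interval,
of bounded variation on all of `ℝ`, and its improper integral over `ℝ` exists, then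
`f̂(y)` exists as an improper integral for every `y` and `f̂(t) → 0` as `|t| → ∞`. -/
theorem riemann_lebesgue (f : ℝ → ℝ)
    (hfloc : ∀ c d : ℝ, IntervalIntegrable f volume c d)
    (hBV : BoundedVariationOn f Set.univ)
    (hfimp : ∃ L : ℝ, HasImpInt f L) :
    ∃ Ff : ℝ → ℂ,
      (∀ y : ℝ, HasImpIntC (fun x => (f x : ℂ) * fourierKernel x y) (Ff y)) ∧
      Tendsto Ff (cocompact ℝ) (𝓝 0) := by
  classical
  obtain ⟨L, L₁, L₂, hL1, hL2, hLsum⟩ := hfimp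
  set V := (eVariationOn f Set.univ).toReal with hV
  have hBVl := hBV.locallyBoundedVariationOn
  obtain ⟨p, q, hp, hq, hfpq, hpb, hqb⟩ :
      ∃ p q : ℝ → ℝ, Monotone p ∧ Monotone q ∧ (∀ x, f x = p x - q x) ∧
        (∀ x, |p x| ≤ V) ∧ (∀ x, |q x| ≤ V + (|f 0| + V)) := by
    have hpb : ∀ x, |variationOnFromTo f Set.univ 0 x| ≤ V := by
      intro x
      rcases le_total (0:ℝ) x with h | h
      · rw [abs_of_nonneg (variationOnFromTo.nonneg_of_le f _ h),
          variationOnFromTo.eq_of_le f _ h]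
        exact ENNReal.toReal_mono hBV (eVariationOn.mono f Set.inter_subset_left)
      · rw [abs_of_nonpos (variationOnFromTo.nonpos_of_ge f _ h),
          variationOnFromTo.eq_of_ge f _ h, neg_neg]
        exact ENNReal.toReal_mono hBV (eVariationOn.mono f Set.inter_subset_left)
    have hfb : ∀ x, |f x| ≤ |f 0| + V := by
      intro x
      have h1 : dist (f x) (f 0) ≤ V := by
        rw [dist_edist]
        exact ENNReal.toReal_mono hBV (eVariationOn.edist_le f (Set.mem_univ x) (Set.mem_univ 0))
      rw [Real.dist_eq] at h1
      calc |f x| = |f 0 + (f x - f 0)| := by ring_nf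
        _ ≤ |f 0| + |f x - f 0| := abs_add_le _ _
        _ ≤ |f 0| + V := by linarith
    refine ⟨fun x => variationOnFromTo f Set.univ 0 x,
      fun x => variationOnFromTo f Set.univ 0 x - f x,
      monotoneOn_univ.1 (variationOnFromTo.monotoneOn hBVl (Set.mem_univ 0)),
      fun a b hab => monotoneOn_univ.1
        (variationOnFromTo.sub_self_monotoneOn hBVl (Set.mem_univ 0)) hab,
      fun x => by ring, hpb, ?_⟩
    intro x
    calc |variationOnFromTo f Set.univ 0 x - f x|
        ≤ |variationOnFromTo f Set.univ 0 x| + |f x| := abs_sub _ _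
      _ ≤ V + (|f 0| + V) := add_le_add (hpb x) (hfb x)
  -- limits of the monotone parts
  obtain ⟨Pp, hpT⟩ : ∃ a, Tendsto p atTop (𝓝 a) :=
    ⟨_, tendsto_atTop_ciSup hp ⟨V, by rintro _ ⟨x, rfl⟩; exact (abs_le.1 (hpb x)).2⟩⟩
  obtain ⟨Pm, hpB⟩ : ∃ a, Tendsto p atBot (𝓝 a) :=
    ⟨_, tendsto_atBot_ciInf hp ⟨-V, by rintro _ ⟨x, rfl⟩; exact (abs_le.1 (hpb x)).1⟩⟩
  obtain ⟨Qp, hqT⟩ : ∃ a, Tendsto q atTop (𝓝 a) :=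
    ⟨_, tendsto_atTop_ciSup hq ⟨V + (|f 0| + V),
      by rintro _ ⟨x, rfl⟩; exact (abs_le.1 (hqb x)).2⟩⟩
  obtain ⟨Qm, hqB⟩ : ∃ a, Tendsto q atBot (𝓝 a) :=
    ⟨_, tendsto_atBot_ciInf hq ⟨-(V + (|f 0| + V)),
      by rintro _ ⟨x, rfl⟩; exact (abs_le.1 (hqb x)).1⟩⟩
  have hfT : Tendsto f atTop (𝓝 (Pp - Qp)) := (hpT.sub hqT).congr fun x => (hfpq x).symm
  have hfB : Tendsto f atBot (𝓝 (Pm - Qm)) := (hpB.sub hqB).congr fun x => (hfpq x).symm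
  have hT0 : Pp - Qp = 0 := RL.limit_eq_zero_atTop hfloc hL2 hfT
  have hB0 : Pm - Qm = 0 := RL.limit_eq_zero_atBot hfloc hL1 hfB
  -- Stieltjes functions and measures
  have hPmle : ∀ x, Pm ≤ p x := fun x =>
    le_of_tendsto hpB ((eventually_le_atBot x).mono fun c hc => hp hc)
  have hPple : ∀ x, p x ≤ Pp := fun x =>
    ge_of_tendsto hpT ((eventually_ge_atTop x).mono fun c hc => hp hc)
  have hQmle : ∀ x, Qm ≤ q x := fun x =>
    le_of_tendsto hqB ((eventually_le_atBot x).mono fun c hc => hq hc)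
  have hQple : ∀ x, q x ≤ Qp := fun x =>
    ge_of_tendsto hqT ((eventually_ge_atTop x).mono fun c hc => hq hc)
  set sp := hp.stieltjesFunction with hspdef
  set sq := hq.stieltjesFunction with hsqdef
  have hsple : ∀ x, p x ≤ sp x := fun x => by
    rw [hspdef, hp.stieltjesFunction_eq]; exact hp.le_rightLim le_rfl
  have hsple' : ∀ x, sp x ≤ p (x + 1) := fun x => by
    rw [hspdef, hp.stieltjesFunction_eq]; exact hp.rightLim_le (lt_add_one x)
  have hsqle : ∀ x, q x ≤ sq x := fun x => by
    rw [hsqdef, hq.stieltjesFunction_eq]; exact hq.le_rightLim le_rfl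
  have hsqle' : ∀ x, sq x ≤ q (x + 1) := fun x => by
    rw [hsqdef, hq.stieltjesFunction_eq]; exact hq.rightLim_le (lt_add_one x)
  have hspT : Tendsto sp atTop (𝓝 Pp) :=
    tendsto_of_tendsto_of_tendsto_of_le_of_le hpT
      (hpT.comp (tendsto_atTop_add_const_right _ 1 tendsto_id)) hsple hsple'
  have hspB : Tendsto sp atBot (𝓝 Pm) :=
    tendsto_of_tendsto_of_tendsto_of_le_of_le hpB
      (hpB.comp (tendsto_atBot_add_const_right _ 1 tendsto_id)) hsple hsple'
  have hsqT : Tendsto sq atTop (𝓝 Qp) :=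
    tendsto_of_tendsto_of_tendsto_of_le_of_le hqT
      (hqT.comp (tendsto_atTop_add_const_right _ 1 tendsto_id)) hsqle hsqle'
  have hsqB : Tendsto sq atBot (𝓝 Qm) :=
    tendsto_of_tendsto_of_tendsto_of_le_of_le hqB
      (hqB.comp (tendsto_atBot_add_const_right _ 1 tendsto_id)) hsqle hsqle'
  haveI : IsFiniteMeasure sp.measure := sp.isFiniteMeasure hspB hspT
  haveI : IsFiniteMeasure sq.measure := sq.isFiniteMeasure hsqB hsqT
  have hμpIic : ∀ x, (sp.measure (Set.Iic x)).toReal = sp x - Pm := fun x => by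
    rw [sp.measure_Iic hspB, ENNReal.toReal_ofReal (by linarith [hPmle x, hsple x])]
  have hμqIic : ∀ x, (sq.measure (Set.Iic x)).toReal = sq x - Qm := fun x => by
    rw [sq.measure_Iic hsqB, ENNReal.toReal_ofReal (by linarith [hQmle x, hsqle x])]
  have hμpU : (sp.measure Set.univ).toReal = Pp - Pm := by
    rw [sp.measure_univ hspB hspT,
      ENNReal.toReal_ofReal (by linarith [hPmle 0, hPple 0])]
  have hμqU : (sq.measure Set.univ).toReal = Qp - Qm := by
    rw [sq.measure_univ hsqB hsqT,
      ENNReal.toReal_ofReal (by linarith [hQmle 0, hQple 0])]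
  have hMeq : (sp.measure Set.univ).toReal = (sq.measure Set.univ).toReal := by
    rw [hμpU, hμqU]; linarith
  -- a.e. representation of f
  have hae : ∀ᵐ x : ℝ ∂volume,
      f x = (sp.measure (Set.Iic x)).toReal - (sq.measure (Set.Iic x)).toReal := by
    have hDn : volume ({x | ¬ContinuousAt p x} ∪ {x | ¬ContinuousAt q x}) = 0 :=
      (hp.countable_not_continuousAt.union hq.countable_not_continuousAt).measure_zero _
    rw [MeasureTheory.ae_iff]
    apply measure_mono_null _ hDn
    intro x hx
    simp only [Set.mem_setOf_eq] at hx
    by_contra hxD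
    apply hx
    simp only [Set.mem_union, Set.mem_setOf_eq, not_or, not_not] at hxD
    obtain ⟨h1, h2⟩ := hxD
    have e1 : sp x = p x := by
      rw [hspdef, hp.stieltjesFunction_eq]
      exact rightLim_eq_of_tendsto
        (h1.mono_left nhdsWithin_le_nhds)
    have e2 : sq x = q x := by
      rw [hsqdef, hq.stieltjesFunction_eq]
      exact rightLim_eq_of_tendsto
        (h2.mono_left nhdsWithin_le_nhds)
    rw [hμpIic, hμqIic, e1, e2]
    have := hfpq x
    linarith
  refine ⟨fun y => if y = 0 then (L : ℂ) else
      (((∫ t, Complex.exp (RL.cy y * (min t 0)) ∂sq.measure)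
          - ∫ t, Complex.exp (RL.cy y * (min t 0)) ∂sp.measure)
        + ((∫ t, Complex.exp (RL.cy y * (max 0 t)) ∂sq.measure)
          - ∫ t, Complex.exp (RL.cy y * (max 0 t)) ∂sp.measure)) / RL.cy y, ?_, ?_⟩
  · -- existence of the improper integral for every y
    intro y
    by_cases hy : y = 0
    · subst hy
      have hker : ∀ x : ℝ, fourierKernel x 0 = 1 := fun x => by simp [fourierKernel]
      refine ⟨(L₁ : ℂ), (L₂ : ℂ), ?_, ?_, ?_⟩
      · have heq : (fun c => ∫ x in c..(0:ℝ), (f x : ℂ) * fourierKernel x 0)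
            = fun c => ((∫ x in c..(0:ℝ), f x : ℝ) : ℂ) := by
          funext c
          simp only [hker, mul_one]
          exact intervalIntegral.integral_ofReal
        rw [heq]
        exact (Complex.continuous_ofReal.tendsto _).comp hL1
      · have heq : (fun c => ∫ x in (0:ℝ)..c, (f x : ℂ) * fourierKernel x 0)
            = fun c => ((∫ x in (0:ℝ)..c, f x : ℝ) : ℂ) := by
          funext c
          simp only [hker, mul_one]
          exact intervalIntegral.integral_ofReal
        rw [heq]
        exact (Complex.continuous_ofReal.tendsto _).comp hL2
      · beta_reduce
        rw [if_pos rfl, hLsum]; push_cast; ring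
    · refine ⟨((∫ t, Complex.exp (RL.cy y * (min t 0)) ∂sq.measure)
            - ∫ t, Complex.exp (RL.cy y * (min t 0)) ∂sp.measure) / RL.cy y,
          ((∫ t, Complex.exp (RL.cy y * (max 0 t)) ∂sq.measure)
            - ∫ t, Complex.exp (RL.cy y * (max 0 t)) ∂sp.measure) / RL.cy y, ?_, ?_, ?_⟩
      · refine Tendsto.congr' ?_
          (Tendsto.div_const
            ((RL.tendsto_B sq.measure y).sub (RL.tendsto_B sp.measure y)) (RL.cy y))
        filter_upwards [eventually_le_atBot (0:ℝ)] with c hc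
        exact (RL.phi_eq sp.measure sq.measure hMeq hy hae hc).symm
      · refine Tendsto.congr' ?_
          (Tendsto.div_const
            ((RL.tendsto_A sq.measure y).sub (RL.tendsto_A sp.measure y)) (RL.cy y))
        filter_upwards [eventually_ge_atTop (0:ℝ)] with c hc
        exact (RL.phi_eq sp.measure sq.measure hMeq hy hae hc).symm
      · beta_reduce
        rw [if_neg hy, add_div]
  · -- decay at infinity
    set C₀ := (sp.measure Set.univ).toReal + (sq.measure Set.univ).toReal with hC₀
    have habs : Tendsto (fun y : ℝ => |y|) (cocompact ℝ) atTop := by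
      exact tendsto_norm_cocompact_atTop (E := ℝ)
    refine squeeze_zero_norm' ?_
      (a := fun y : ℝ => (2 * C₀ / (2 * Real.pi)) * |y|⁻¹) ?_
    · filter_upwards [habs.eventually_ge_atTop 1] with y hy1
      have hy0 : y ≠ 0 := by
        intro h; rw [h] at hy1; simp at hy1; linarith
      have hyabs : (0:ℝ) < |y| := lt_of_lt_of_le one_pos hy1
      rw [if_neg hy0, norm_div, RL.norm_cy]
      have h1 := RL.norm_int_exp sp.measure (fun t => min t 0) y
      have h2 := RL.norm_int_exp sq.measure (fun t => min t 0) y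
      have h3 := RL.norm_int_exp sp.measure (fun t => max 0 t) y
      have h4 := RL.norm_int_exp sq.measure (fun t => max 0 t) y
      have hS : ‖(((∫ t, Complex.exp (RL.cy y * (min t 0)) ∂sq.measure)
            - ∫ t, Complex.exp (RL.cy y * (min t 0)) ∂sp.measure)
          + ((∫ t, Complex.exp (RL.cy y * (max 0 t)) ∂sq.measure)
            - ∫ t, Complex.exp (RL.cy y * (max 0 t)) ∂sp.measure))‖ ≤ 2 * C₀ := by
        calc ‖_ + _‖ ≤ ‖_‖ + ‖_‖ := norm_add_le _ _
          _ ≤ (‖(∫ t, Complex.exp (RL.cy y * (min t 0)) ∂sq.measure)‖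
                + ‖(∫ t, Complex.exp (RL.cy y * (min t 0)) ∂sp.measure)‖)
              + (‖(∫ t, Complex.exp (RL.cy y * (max 0 t)) ∂sq.measure)‖
                + ‖(∫ t, Complex.exp (RL.cy y * (max 0 t)) ∂sp.measure)‖) :=
            add_le_add (norm_sub_le _ _) (norm_sub_le _ _)
          _ ≤ 2 * C₀ := by rw [hC₀]; linarith
      calc _ ≤ (2 * C₀) / (2 * Real.pi * |y|) := by gcongr
        _ = (2 * C₀ / (2 * Real.pi)) * |y|⁻¹ := by
            rw [← div_div, div_eq_mul_inv]
    · have := (tendsto_inv_atTop_zero.comp habs).const_mul (2 * C₀ / (2 * Real.pi))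
      simpa using this
end
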